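/- Let N be a tier-1 binary phylogenetic network with embedded tree T. Then there exists a tier-1 network M containing a triangle, with T as its embedded tree, such that M is obtained from N by a single head move. -/

import Mathlib

noncomputable section

namespace Phylo

/-- In-degree of a vertex in a digraph given by an edge relation. -/
def indeg {V : Type} (E : V → V → Prop) (v : V) : ℕ := Nat.card {u // E u v}

/-- Out-degree of a vertex in a digraph given by an edge relation. -/
def outdeg {V : Type} (E : V → V → Prop) (v : V) : ℕ := Nat.card {w // E v w}

def IsRoot {V : Type} (E : V → V → Prop) (v : V) : Prop := indeg E v = 0 ∧ outdeg E v = 1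
def IsLeafNode {V : Type} (E : V → V → Prop) (v : V) : Prop := indeg E v = 1 ∧ outdeg E v = 0
def IsSplit {V : Type} (E : V → V → Prop) (v : V) : Prop := indeg E v = 1 ∧ outdeg E v = 2
def IsRetic {V : Type} (E : V → V → Prop) (v : V) : Prop := indeg E v = 2 ∧ outdeg E v = 1

/-- A directed graph is acyclic if no vertex lies on a directed cycle. -/
def Acyclic {V : Type} (E : V → V → Prop) : Prop := ∀ v, ¬ Relation.TransGen E v v

/-- `(V, E)` together with the leaf-labelling `lab : X → V` is a binary phylogenetic
network on leaf set `X`: an acyclic digraph with a unique root (indeg 0, outdeg 1),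
leaves (indeg 1, outdeg 0) bijectively labelled by `X`, and all other nodes split
nodes (indeg 1, outdeg 2) or reticulations (indeg 2, outdeg 1). -/
structure IsPhyloNet {V X : Type} [Fintype V] (E : V → V → Prop) (lab : X → V) : Prop where
  acyclic : Acyclic E
  root_unique : ∃! v, IsRoot E v
  lab_inj : Function.Injective lab
  leaf_iff : ∀ v, IsLeafNode E v ↔ v ∈ Set.range lab
  node_types : ∀ v, IsRoot E v ∨ IsLeafNode E v ∨ IsSplit E v ∨ IsRetic E v

/-- The reticulation number of a digraph. -/
def reticCount {V : Type} (E : V → V → Prop) : ℕ := Nat.card {v // IsRetic E v}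

/-- Labelled isomorphism of leaf-labelled digraphs. -/
def LabIso {V V' X : Type} (E : V → V → Prop) (lab : X → V)
    (E' : V' → V' → Prop) (lab' : X → V') : Prop :=
  ∃ φ : V ≃ V', (∀ a b, E a b ↔ E' (φ a) (φ b)) ∧ ∀ x, φ (lab x) = lab' x

/-- Result of the head move of the edge `(u,v)` to the edge `(s,t)`, where `p` is the
other parent of the reticulation `v` and `c` its child.  The former head `v` is reused
as the node `v'` subdividing `(s,t)`: we delete `(u,v), (p,v), (v,c), (s,t)`, add
`(p,c)` (suppressing `v`), `(s,v), (v,t)` (subdividing `(s,t)` by `v' = v`), and the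
new edge `(u,v') = (u,v)`. -/
def headMoveEdges {V : Type} (E : V → V → Prop) (u v p c s t : V) : V → V → Prop :=
  fun a b =>
    (E a b ∧ (a, b) ≠ (p, v) ∧ (a, b) ≠ (v, c) ∧ (a, b) ≠ (s, t) ∧ (a, b) ≠ (u, v))
      ∨ (a, b) = (p, c) ∨ (a, b) = (s, v) ∨ (a, b) = (v, t) ∨ (a, b) = (u, v)

/-- Result of the tail move of the edge `(u,v)` to the edge `(s,t)`, where `p` is the
parent of the split node `u` and `c` its other child; `u` is reused as the node `u'`
subdividing `(s,t)`. -/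
def tailMoveEdges {V : Type} (E : V → V → Prop) (u v p c s t : V) : V → V → Prop :=
  fun a b =>
    (E a b ∧ (a, b) ≠ (p, u) ∧ (a, b) ≠ (u, c) ∧ (a, b) ≠ (s, t) ∧ (a, b) ≠ (u, v))
      ∨ (a, b) = (p, c) ∨ (a, b) = (s, u) ∨ (a, b) = (u, t) ∨ (a, b) = (u, v)

/-- A leaf-labelled digraph on a finite vertex set, the carrier for phylogenetic
networks on leaf set `X`. -/
structure Net (X : Type) where
  V : Type
  fin : Fintype V
  E : V → V → Prop
  lab : X → V

attribute [instance] Net.fin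

/-- `N` is a binary phylogenetic network. -/
def Net.valid {X : Type} (N : Net X) : Prop := IsPhyloNet N.E N.lab

/-- Labelled isomorphism of two leaf-labelled digraphs. -/
def NetIso {X : Type} (N N' : Net X) : Prop := LabIso N.E N.lab N'.E N'.lab

/-- `N'` is obtained from `N` by one valid head move. -/
def HeadMoveStep {X : Type} (N N' : Net X) : Prop :=
  N.valid ∧ N'.valid ∧ ∃ u v p c s t : N.V,
    N.E u v ∧ N.E p v ∧ p ≠ u ∧ N.E v c ∧ N.E s t ∧
    LabIso (headMoveEdges N.E u v p c s t) N.lab N'.E N'.lab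

/-- `N'` is obtained from `N` by one valid tail move. -/
def TailMoveStep {X : Type} (N N' : Net X) : Prop :=
  N.valid ∧ N'.valid ∧ ∃ u v p c s t : N.V,
    N.E u v ∧ N.E p u ∧ N.E u c ∧ c ≠ v ∧ N.E s t ∧
    LabIso (tailMoveEdges N.E u v p c s t) N.lab N'.E N'.lab

/-- The digraph obtained by subdividing the edge `(s,t)` with a fresh node (`none`). -/
def subdivEdge {V : Type} (E : V → V → Prop) (s t : V) : Option V → Option V → Prop
  | some a, some b => E a b ∧ (a, b) ≠ (s, t)
  | some a, none => a = s
  | none, some b => b = t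
  | none, none => False

/-- `N'` is obtained from `N` by one valid distance-`d` head move: after subdividing
the target edge `(s,t)` with a new node `v'`, a shortest path from the old head `v`
to `v'` in the underlying undirected graph has length at most `d + 1`. -/
def HeadMoveStepD {X : Type} (d : ℕ) (N N' : Net X) : Prop :=
  N.valid ∧ N'.valid ∧ ∃ u v p c s t : N.V,
    N.E u v ∧ N.E p v ∧ p ≠ u ∧ N.E v c ∧ N.E s t ∧
    (SimpleGraph.fromRel (subdivEdge N.E s t)).dist (some v) none ≤ d + 1 ∧
    LabIso (headMoveEdges N.E u v p c s t) N.lab N'.E N'.lab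

/-- `N` and `N'` are connected by a finite sequence of `R`-moves (up to labelled
isomorphism, i.e. renaming of vertices). -/
def ConnectedBy {X : Type} (R : Net X → Net X → Prop) (N N' : Net X) : Prop :=
  Relation.ReflTransGen (fun A B => R A B ∨ NetIso A B) N N'

/-- `N'` can be reached from `N` by at most `n` `R`-moves (up to labelled isomorphism). -/
def stepsLE {X : Type} (R : Net X → Net X → Prop) : ℕ → Net X → Net X → Prop
  | 0, N, N' => NetIso N N'
  | n + 1, N, N' => stepsLE R n N N' ∨ ∃ M, R N M ∧ stepsLE R n M N'

/-- `(V, E)` is a subdivision of `(W, F)` via the injection `φ`: every vertex outside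
the image of `φ` is a redundant (indeg 1, outdeg 1) node, and `F a b` holds iff there
is an `E`-path from `φ a` to `φ b` all of whose internal vertices avoid the image. -/
def IsSubdivision {W V : Type} (F : W → W → Prop) (E : V → V → Prop) (φ : W → V) : Prop :=
  Function.Injective φ ∧
  (∀ v, v ∉ Set.range φ → indeg E v = 1 ∧ outdeg E v = 1) ∧
  (∀ a b, F a b ↔ ∃ l : List V,
      List.Chain E (φ a) (l ++ [φ b]) ∧ ∀ x ∈ l, x ∉ Set.range φ)

/-- A rooted phylogenetic tree on `X`: a phylogenetic network with no reticulations. -/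
def IsTree {X : Type} (T : Net X) : Prop := T.valid ∧ reticCount T.E = 0

/-- The tree `T` is embedded in `N`: some `X`-labelled subgraph of `N` is a
subdivision of `T`. -/
def EmbeddedTree {X : Type} (T N : Net X) : Prop :=
  IsTree T ∧ ∃ (E' : N.V → N.V → Prop) (φ : T.V → N.V),
    (∀ a b, E' a b → N.E a b) ∧ IsSubdivision T.E E' φ ∧ ∀ x, φ (T.lab x) = N.lab x

/-- The digraph contains a triangle `t, s, r` with edges `(t,s), (t,r), (s,r)`. -/
def HasTriangle {V : Type} (E : V → V → Prop) : Prop :=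
  ∃ t s r, E t s ∧ E t r ∧ E s r

/-- The network has `k` reticulations at the top, with nodes `c` (child of the root),
`a i`, `b i` for `1 ≤ i ≤ k`. -/
def ReticsAtTop {V : Type} (E : V → V → Prop) (k : ℕ) (c : V) (a b : ℕ → V) : Prop :=
  (∃ ρ, IsRoot E ρ ∧ E ρ c) ∧ E c (a 1) ∧ E c (b 1) ∧
  (∀ i, 1 ≤ i → i ≤ k → E (a i) (b i) ∧ IsSplit E (a i) ∧ IsRetic E (b i)) ∧
  (∀ i, 1 ≤ i → i < k →
    ((E (a i) (a (i + 1)) ∧ E (b i) (b (i + 1))) ∨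
     (E (a i) (b (i + 1)) ∧ E (b i) (a (i + 1)))))

/-- The network has `k` reticulations neatly at the top. -/
def NeatlyAtTop {V : Type} (E : V → V → Prop) (k : ℕ) (c : V) (a b : ℕ → V) : Prop :=
  (∃ ρ, IsRoot E ρ ∧ E ρ c) ∧ E c (a 1) ∧ E c (b 1) ∧
  (∀ i, 1 ≤ i → i ≤ k → E (a i) (b i) ∧ IsSplit E (a i) ∧ IsRetic E (b i)) ∧
  (∀ i, 1 ≤ i → i < k → E (a i) (a (i + 1)) ∧ E (b i) (b (i + 1)))



/-! ### Auxiliary cardinality lemmas -/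

set_option linter.unusedSectionVars false

section CardHelpers

variable {V : Type} [Fintype V]

lemma card_zero_iff (P : V → Prop) : Nat.card {z // P z} = 0 ↔ ∀ z, ¬ P z := by
  rw [Nat.card_eq_zero]
  constructor
  · rintro (h | h)
    · intro z hz; exact h.elim' ⟨z, hz⟩
    · exact absurd (Subtype.finite (p := P)) h.not_finite
  · intro h; left; exact ⟨fun z => h z.1 z.2⟩

lemma card_one_iff (P : V → Prop) :
    Nat.card {z // P z} = 1 ↔ ∃ a, P a ∧ ∀ z, P z → z = a := by
  rw [Nat.card_eq_one_iff_exists]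
  constructor
  · rintro ⟨⟨a, ha⟩, h⟩
    exact ⟨a, ha, fun z hz => congrArg Subtype.val (h ⟨z, hz⟩)⟩
  · rintro ⟨a, ha, h⟩
    exact ⟨⟨a, ha⟩, fun z => Subtype.ext (h z.1 z.2)⟩

lemma card_two_iff (P : V → Prop) :
    Nat.card {z // P z} = 2 ↔
      ∃ a b, a ≠ b ∧ P a ∧ P b ∧ ∀ z, P z → z = a ∨ z = b := by
  rw [Nat.card_eq_two_iff]
  constructor
  · rintro ⟨⟨a, ha⟩, ⟨b, hb⟩, hab, huniv⟩
    refine ⟨a, b, fun h => hab (Subtype.ext h), ha, hb, fun z hz => ?_⟩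
    have : (⟨z, hz⟩ : {z // P z}) ∈ ({⟨a, ha⟩, ⟨b, hb⟩} : Set {z // P z}) := by
      rw [huniv]; trivial
    rcases this with h | h
    · left; exact congrArg Subtype.val h
    · right; exact congrArg Subtype.val h
  · rintro ⟨a, b, hab, ha, hb, h⟩
    refine ⟨⟨a, ha⟩, ⟨b, hb⟩, fun hh => hab (congrArg Subtype.val hh), ?_⟩
    ext ⟨z, hz⟩
    simp only [Set.mem_insert_iff, Set.mem_singleton_iff, Set.mem_univ, iff_true]
    rcases h z hz with h' | h'
    · left; exact Subtype.ext h'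
    · right; exact Subtype.ext h'

lemma card_congr_iff {P Q : V → Prop} (h : ∀ z, P z ↔ Q z) :
    Nat.card {z // P z} = Nat.card {z // Q z} :=
  Nat.card_congr (Equiv.subtypeEquivRight h)

/-- Swapping one element of a predicate for another keeps the cardinality. -/
lemma card_swap {P P' : V → Prop} {d a : V} (hd : P d) (ha : ¬ P a)
    (h : ∀ z, P' z ↔ (P z ∧ z ≠ d) ∨ z = a) :
    Nat.card {z // P' z} = Nat.card {z // P z} := by
  have hset : {z | P' z} = insert a ({z | P z} \ {a, d}) := by
    ext z
    simp only [Set.mem_setOf_eq, Set.mem_insert_iff, Set.mem_diff, Set.mem_singleton_iff, h z]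
    constructor
    · rintro (⟨hz, hzd⟩ | rfl)
      · by_cases hza : z = a
        · exact Or.inl hza
        · exact Or.inr ⟨hz, by push_neg; exact ⟨hza, hzd⟩⟩
      · exact Or.inl rfl
    · rintro (rfl | ⟨hz, hnz⟩)
      · exact Or.inr rfl
      · push_neg at hnz
        exact Or.inl ⟨hz, hnz.2⟩
  have hset2 : {z | P z} = insert d ({z | P z} \ {a, d}) := by
    ext z
    simp only [Set.mem_setOf_eq, Set.mem_insert_iff, Set.mem_diff, Set.mem_singleton_iff]
    constructor
    · intro hz
      by_cases hzd : z = d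
      · exact Or.inl hzd
      · by_cases hza : z = a
        · exact absurd (hza ▸ hz) ha
        · exact Or.inr ⟨hz, by push_neg; exact ⟨hza, hzd⟩⟩
    · rintro (rfl | ⟨hz, _⟩) <;> [exact hd; exact hz]
  have hna : a ∉ ({z | P z} \ {a, d}) := by simp
  have hnd : d ∉ ({z | P z} \ {a, d}) := by simp
  calc Nat.card {z // P' z} = ({z | P' z} : Set V).ncard := Nat.card_coe_set_eq _
    _ = (insert a ({z | P z} \ {a, d})).ncard := by rw [hset]
    _ = ({z | P z} \ {a, d}).ncard + 1 := Set.ncard_insert_of_notMem hna (Set.toFinite _)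
    _ = (insert d ({z | P z} \ {a, d})).ncard := (Set.ncard_insert_of_notMem hnd (Set.toFinite _)).symm
    _ = ({z | P z} : Set V).ncard := by rw [← hset2]
    _ = Nat.card {z // P z} := (Nat.card_coe_set_eq _).symm

end CardHelpers

section DegreeHelpers

variable {V : Type} [Fintype V] {E1 E2 : V → V → Prop}

lemma outdeg_eq_of_iff {v : V} (h : ∀ z, E2 v z ↔ E1 v z) : outdeg E2 v = outdeg E1 v :=
  card_congr_iff h

lemma indeg_eq_of_iff {v : V} (h : ∀ z, E2 z v ↔ E1 z v) : indeg E2 v = indeg E1 v :=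
  card_congr_iff h

lemma outdeg_swap {v d a : V} (hd : E1 v d) (ha : ¬ E1 v a)
    (h : ∀ z, E2 v z ↔ (E1 v z ∧ z ≠ d) ∨ z = a) : outdeg E2 v = outdeg E1 v :=
  card_swap hd ha h

lemma indeg_swap {v d a : V} (hd : E1 d v) (ha : ¬ E1 a v)
    (h : ∀ z, E2 z v ↔ (E1 z v ∧ z ≠ d) ∨ z = a) : indeg E2 v = indeg E1 v :=
  card_swap hd ha h

lemma outdeg_one_exists {v : V} (h : outdeg E1 v = 1) : ∃ a, E1 v a ∧ ∀ z, E1 v z → z = a :=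
  (card_one_iff _).mp h

lemma indeg_one_exists {v : V} (h : indeg E1 v = 1) : ∃ a, E1 a v ∧ ∀ z, E1 z v → z = a :=
  (card_one_iff _).mp h

lemma outdeg_zero_iff {v : V} : outdeg E1 v = 0 ↔ ∀ z, ¬ E1 v z := card_zero_iff _

lemma indeg_zero_iff {v : V} : indeg E1 v = 0 ↔ ∀ z, ¬ E1 z v := card_zero_iff _

end DegreeHelpers

/-! ### Paths with interior avoiding a set -/

section Reach

variable {V : Type}

/-- A nonempty path from `x` to `y` whose interior vertices avoid `S`. -/
inductive Reach' (R : V → V → Prop) (S : Set V) : V → V → Prop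
  | single {x y : V} : R x y → Reach' R S x y
  | cons {x m y : V} : R x m → m ∉ S → Reach' R S m y → Reach' R S x y

lemma reach'_iff_chain (R : V → V → Prop) (S : Set V) (x y : V) :
    Reach' R S x y ↔ ∃ l : List V, List.Chain R x (l ++ [y]) ∧ ∀ z ∈ l, z ∉ S := by
  constructor
  · intro h
    induction h with
    | single h => exact ⟨[], List.isChain_pair.mpr h, by simp⟩
    | cons h hm _ ih =>
      obtain ⟨l, hc, hl⟩ := ih
      refine ⟨_ :: l, List.isChain_cons_cons.mpr ⟨h, hc⟩, ?_⟩
      intro z hz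
      rcases List.mem_cons.mp hz with rfl | hz
      · exact hm
      · exact hl z hz
  · rintro ⟨l, hc, hl⟩
    induction l generalizing x with
    | nil => exact Reach'.single (List.isChain_pair.mp hc)
    | cons m l ih =>
      simp only [List.cons_append, List.chain_cons] at hc
      exact Reach'.cons (List.isChain_cons_cons.mp hc).1 (hl m (by simp)) (ih m (List.isChain_cons_cons.mp hc).2 (fun z hz => hl z (by simp [hz])))

lemma chain_last {R : V → V → Prop} :
    ∀ (l : List V) (x y : V), List.Chain R x (l ++ [y]) → ∃ z, R z y := by
  intro l
  induction l with
  | nil => intro x y h; exact ⟨x, List.isChain_pair.mp h⟩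
  | cons m l ih =>
    intro x y h
    simp only [List.cons_append, List.chain_cons] at h
    exact ih m y (List.isChain_cons_cons.mp h).2

lemma reach'_last {R : V → V → Prop} {S : Set V} {x y : V} (h : Reach' R S x y) :
    ∃ z, R z y := by
  induction h with
  | single h => exact ⟨_, h⟩
  | cons _ _ _ ih => exact ih

lemma reach'_first {R : V → V → Prop} {S : Set V} {x y : V} (h : Reach' R S x y) :
    ∃ z, R x z := by
  cases h with
  | single h => exact ⟨_, h⟩
  | cons h _ _ => exact ⟨_, h⟩

/-- Forced walks: if the out-neighbour is unique at the start and at every vertex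
outside `S`, then two paths with interiors avoiding `S` and endpoints in `S` agree. -/
lemma reach'_force {R : V → V → Prop} {S : Set V}
    (hS : ∀ v, v ∉ S → ∀ a b, R v a → R v b → a = b) :
    ∀ {x y1 y2 : V}, Reach' R S x y1 → Reach' R S x y2 →
      (∀ a b, R x a → R x b → a = b) → y1 ∈ S → y2 ∈ S → y1 = y2 := by
  intro x y1 y2 h1
  induction h1 with
  | @single x y1 h =>
    intro h2 hx hy1 hy2
    cases h2 with
    | single h' => exact hx _ _ h h'
    | cons h' hm _ => exact absurd ((hx _ _ h h') ▸ hy1) hm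
  | @cons x m y1 h hm _ ih =>
    intro h2 hx hy1 hy2
    cases h2 with
    | single h' => exact absurd ((hx _ _ h' h) ▸ hy2) hm
    | cons h' hm' hrest =>
      have : m = _ := hx _ _ h h'
      subst this
      exact ih hrest (hS m hm) hy1 hy2

lemma reflTransGen_of_reach' {R : V → V → Prop} {S : Set V} {x y : V}
    (h : Reach' R S x y) : Relation.ReflTransGen R x y := by
  induction h with
  | single h => exact Relation.ReflTransGen.single h
  | cons h _ _ ih => exact Relation.ReflTransGen.head h ih

lemma transGen_of_reach' {R : V → V → Prop} {S : Set V} {x y : V}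
    (h : Reach' R S x y) : Relation.TransGen R x y := by
  induction h with
  | single h => exact Relation.TransGen.single h
  | cons h _ _ ih => exact Relation.TransGen.head h ih

end Reach

/-! ### Acyclicity of the moved graph -/

section Acyc

variable {V : Type} {B N : V → V → Prop} {r s t w : V}

lemma rtg_transfer (hBN : ∀ a b, B a b → Relation.TransGen N a b) {a b : V}
    (h : Relation.ReflTransGen B a b) : a = b ∨ Relation.TransGen N a b := by
  induction h with
  | refl => exact Or.inl rfl
  | tail _ hbc ih =>
    rcases ih with rfl | ih
    · exact Or.inr (hBN _ _ hbc)
    · exact Or.inr (ih.trans (hBN _ _ hbc))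

/-- Key acyclicity lemma: adding edges `(s,r)` and `(r,t)` to an acyclic graph `B`
(compatible with an acyclic `N`) where `r` has no `B`-out-edges and only `w`, `s` as
possible `B`-in-neighbours, keeps the graph acyclic, provided `t` cannot reach `s`
or `w` in `B`. -/
lemma acyclic_extend
    (hBN : ∀ a b, B a b → Relation.TransGen N a b)
    (hNacy : ∀ v, ¬ Relation.TransGen N v v)
    (hr_out : ∀ z, ¬ B r z)
    (hr_in : ∀ z, B z r → z = w ∨ z = s)
    (hts : ¬ Relation.ReflTransGen B t s)
    (htw : ¬ Relation.ReflTransGen B t w)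
    (hrs : r ≠ s) (hrt : r ≠ t) (hrw : r ≠ w) :
    ∀ v, ¬ Relation.TransGen (fun a b => B a b ∨ (a, b) = (s, r) ∨ (a, b) = (r, t)) v v := by
  set M' : V → V → Prop := fun a b => B a b ∨ (a, b) = (s, r) ∨ (a, b) = (r, t) with hM'
  have hBacy : ∀ v, ¬ Relation.TransGen B v v := by
    intro v hv
    refine hNacy v ?_
    have := Relation.TransGen.mono (r := B) (fun a b h => hBN a b h) _ _ hv
    rwa [Relation.transGen_idem] at this
  -- P a : a reaches a parent of r in B
  set P : V → Prop := fun a => Relation.ReflTransGen B a s ∨ Relation.ReflTransGen B a w with hP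
  have key : ∀ a b, Relation.TransGen M' a b →
      (Relation.TransGen B a b ∨ (b = r ∧ P a) ∨
        (Relation.ReflTransGen B t b ∧ (a = r ∨ P a))) := by
    intro a b h
    induction h with
    | single h =>
      rcases h with h | h | h
      · exact Or.inl (Relation.TransGen.single h)
      · rw [Prod.mk.injEq] at h
        exact Or.inr (Or.inl ⟨h.2, Or.inl (h.1 ▸ Relation.ReflTransGen.refl)⟩)
      · rw [Prod.mk.injEq] at h
        exact Or.inr (Or.inr ⟨h.2 ▸ Relation.ReflTransGen.refl, Or.inl h.1⟩)
    | @tail b' c' hab hbc ih =>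
      rcases ih with ih | ⟨rfl, hPa⟩ | ⟨htb, hflag⟩
      · -- TransGen B a b'
        rcases hbc with h | h | h
        · exact Or.inl (ih.tail h)
        · rw [Prod.mk.injEq] at h
          exact Or.inr (Or.inl ⟨h.2, Or.inl (h.1 ▸ ih.to_reflTransGen)⟩)
        · rw [Prod.mk.injEq] at h
          -- b' = r : last B-edge into r comes from w or s
          obtain ⟨rfl, rfl⟩ := h
          obtain ⟨z, hz1, hz2⟩ := Relation.TransGen.tail'_iff.mp ih
          rcases hr_in z hz2 with rfl | rfl
          · exact Or.inr (Or.inr ⟨Relation.ReflTransGen.refl, Or.inr (Or.inr hz1)⟩)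
          · exact Or.inr (Or.inr ⟨Relation.ReflTransGen.refl, Or.inr (Or.inl hz1)⟩)
      · -- b' = r, P a
        rcases hbc with h | h | h
        · exact absurd h (hr_out _)
        · rw [Prod.mk.injEq] at h
          exact absurd h.1 hrs
        · rw [Prod.mk.injEq] at h
          exact Or.inr (Or.inr ⟨h.2 ▸ Relation.ReflTransGen.refl, Or.inr hPa⟩)
      · -- ReflTransGen B t b'
        rcases hbc with h | h | h
        · exact Or.inr (Or.inr ⟨htb.tail h, hflag⟩)
        · rw [Prod.mk.injEq] at h
          exact absurd (h.1 ▸ htb) hts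
        · rw [Prod.mk.injEq] at h
          -- b' = r reached from t in B: impossible
          exfalso
          rcases (Relation.ReflTransGen.cases_tail (h.1 ▸ htb)) with heq | ⟨z, hz1, hz2⟩
          · exact hrt heq
          · rcases hr_in z hz2 with rfl | rfl
            · exact htw hz1
            · exact hts hz1
  intro v hv
  rcases key v v hv with h | ⟨rfl, hPv⟩ | ⟨htv, hflag⟩
  · exact hBacy v h
  · rcases hPv with h | h
    · rcases Relation.ReflTransGen.cases_head h with heq | ⟨z, hz1, _⟩
      · exact hrs heq
      · exact hr_out _ hz1
    · rcases Relation.ReflTransGen.cases_head h with heq | ⟨z, hz1, _⟩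
      · exact hrw heq
      · exact hr_out _ hz1
  · rcases hflag with rfl | hPv
    · rcases Relation.ReflTransGen.cases_tail htv with heq | ⟨z, hz1, hz2⟩
      · exact hrt heq
      · rcases hr_in z hz2 with rfl | rfl
        · exact htw hz1
        · exact hts hz1
    · rcases hPv with h | h
      · exact hts (htv.trans h)
      · exact htw (htv.trans h)

end Acyc

/-! ### Sinks and sources in finite acyclic digraphs -/

section WFs

variable {V : Type} [Fintype V] {E : V → V → Prop}

lemma exists_sink (hacy : Acyclic E) (v : V) :
    ∃ m, Relation.ReflTransGen E v m ∧ ∀ z, ¬ E m z := by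
  haveI : IsTrans V (fun a b => Relation.TransGen E b a) :=
    ⟨fun a b c h1 h2 => Relation.TransGen.trans h2 h1⟩
  haveI : IsIrrefl V (fun a b => Relation.TransGen E b a) := ⟨fun a h => hacy a h⟩
  obtain ⟨m, hm, hmin⟩ :=
    (Finite.wellFounded_of_trans_of_irrefl (fun a b : V => Relation.TransGen E b a)).has_min
      {z | Relation.ReflTransGen E v z} ⟨v, Relation.ReflTransGen.refl⟩
  exact ⟨m, hm, fun z hz => hmin z (hm.tail hz) (Relation.TransGen.single hz)⟩

lemma exists_source (hacy : Acyclic E) (v : V) :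
    ∃ m, Relation.ReflTransGen E m v ∧ ∀ z, ¬ E z m := by
  haveI : IsTrans V (fun a b : V => Relation.TransGen E a b) :=
    ⟨fun a b c h1 h2 => Relation.TransGen.trans h1 h2⟩
  haveI : IsIrrefl V (fun a b : V => Relation.TransGen E a b) := ⟨fun a h => hacy a h⟩
  obtain ⟨m, hm, hmin⟩ :=
    (Finite.wellFounded_of_trans_of_irrefl (fun a b : V => Relation.TransGen E a b)).has_min
      {z | Relation.ReflTransGen E z v} ⟨v, Relation.ReflTransGen.refl⟩
  exact ⟨m, hm, fun z hz => hmin z (Relation.ReflTransGen.head hz hm) (Relation.TransGen.single hz)⟩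

end WFs

/-! ### Translation of embedding paths under the head move (patterns I and II) -/

section TranslateI

variable {V : Type} {E' E'' : V → V → Prop} {S : Set V} {q r c s t : V}

lemma translate_F
    (hE'' : ∀ a b, E'' a b ↔ ((E' a b ∧ ¬(a = q ∧ b = r) ∧ ¬(a = r ∧ b = c) ∧ ¬(a = s ∧ b = t))
      ∨ (a = q ∧ b = c) ∨ (a = s ∧ b = r) ∨ (a = r ∧ b = t)))
    (hinr : ∀ z, E' z r → z = q) (houtr : ∀ z, E' r z → z = c)
    (hrS : r ∉ S) (hcr : c ≠ r) :
    ∀ {x y}, Reach' E' S x y → y ≠ r →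
      ((x ≠ r → Reach' E'' S x y) ∧ (x = r → y = c ∨ (c ∉ S ∧ Reach' E'' S c y))) := by
  have eQC : E'' q c := (hE'' q c).mpr (Or.inr (Or.inl ⟨rfl, rfl⟩))
  have eSR : E'' s r := (hE'' s r).mpr (Or.inr (Or.inr (Or.inl ⟨rfl, rfl⟩)))
  have eRT : E'' r t := (hE'' r t).mpr (Or.inr (Or.inr (Or.inr ⟨rfl, rfl⟩)))
  intro x y h
  induction h with
  | @single x y h =>
    intro hy
    refine ⟨?_, ?_⟩
    · intro hx
      by_cases hxy : x = s ∧ y = t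
      · obtain ⟨rfl, rfl⟩ := hxy
        exact Reach'.cons eSR hrS (Reach'.single eRT)
      · exact Reach'.single ((hE'' x y).mpr
          (Or.inl ⟨h, fun hh => hy hh.2, fun hh => hx hh.1, hxy⟩))
    · rintro rfl
      exact Or.inl (houtr _ h)
  | @cons x m y h hm hrest ih =>
    intro hy
    have ih' := ih hy
    refine ⟨?_, ?_⟩
    · intro hx
      by_cases hmr : m = r
      · subst hmr
        obtain rfl : x = q := hinr _ h
        rcases ih'.2 rfl with rfl | ⟨hcS, hrr⟩
        · exact Reach'.single eQC
        · exact Reach'.cons eQC hcS hrr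
      · by_cases hxy : x = s ∧ m = t
        · obtain ⟨rfl, rfl⟩ := hxy
          exact Reach'.cons eSR hrS (Reach'.cons eRT hm (ih'.1 hmr))
        · exact Reach'.cons ((hE'' x m).mpr
            (Or.inl ⟨h, fun hh => hmr hh.2, fun hh => hx hh.1, hxy⟩)) hm (ih'.1 hmr)
    · rintro rfl
      obtain rfl : m = c := houtr _ h
      exact Or.inr ⟨hm, ih'.1 hcr⟩

lemma translate_G
    (hE'' : ∀ a b, E'' a b ↔ ((E' a b ∧ ¬(a = q ∧ b = r) ∧ ¬(a = r ∧ b = c) ∧ ¬(a = s ∧ b = t))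
      ∨ (a = q ∧ b = c) ∨ (a = s ∧ b = r) ∨ (a = r ∧ b = t)))
    (hinr : ∀ z, E' z r → z = q) (houtr : ∀ z, E' r z → z = c)
    (hqr' : E' q r) (hrc' : E' r c) (hst : E' s t)
    (hrS : r ∉ S) (htr : t ≠ r) (hcr : c ≠ r) (hqr : q ≠ r) (hsr : s ≠ r) :
    ∀ {x y}, Reach' E'' S x y → y ≠ r →
      ((x ≠ r → Reach' E' S x y) ∧ (x = r → y = t ∨ (t ∉ S ∧ Reach' E' S t y))) := by
  have hin'' : ∀ z, E'' z r → z = s := by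
    intro z h
    rcases (hE'' z r).mp h with ⟨h1, h2, _, _⟩ | ⟨_, h'⟩ | ⟨h', _⟩ | ⟨_, h'⟩
    · exact absurd ⟨hinr _ h1, rfl⟩ h2
    · exact absurd h'.symm hcr
    · exact h'
    · exact absurd h'.symm htr
  have hout'' : ∀ z, E'' r z → z = t := by
    intro z h
    rcases (hE'' r z).mp h with ⟨h1, _, h3, _⟩ | ⟨h', _⟩ | ⟨h', _⟩ | ⟨_, h'⟩
    · exact absurd ⟨rfl, houtr _ h1⟩ h3
    · exact absurd h'.symm hqr
    · exact absurd h'.symm hsr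
    · exact h'
  intro x y h
  induction h with
  | @single x y h =>
    intro hy
    refine ⟨?_, fun hx => Or.inl (hout'' _ (hx ▸ h))⟩
    intro hx
    rcases (hE'' x y).mp h with ⟨h1, _, _, _⟩ | ⟨rfl, rfl⟩ | ⟨_, h'⟩ | ⟨h', _⟩
    · exact Reach'.single h1
    · exact Reach'.cons hqr' hrS (Reach'.single hrc')
    · exact absurd h' hy
    · exact absurd h' hx
  | @cons x m y h hm hrest ih =>
    intro hy
    have ih' := ih hy
    refine ⟨?_, ?_⟩
    · intro hx
      by_cases hmr : m = r
      · subst hmr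
        obtain rfl : x = s := hin'' _ h
        rcases ih'.2 rfl with rfl | ⟨htS, hrr⟩
        · exact Reach'.single hst
        · exact Reach'.cons hst htS hrr
      · rcases (hE'' x m).mp h with ⟨h1, _, _, _⟩ | ⟨rfl, rfl⟩ | ⟨_, h'⟩ | ⟨h', _⟩
        · exact Reach'.cons h1 hm (ih'.1 hmr)
        · exact Reach'.cons hqr' hrS (Reach'.cons hrc' hm (ih'.1 hmr))
        · exact absurd h' hmr
        · exact absurd h' hx
    · rintro rfl
      obtain rfl : m = t := hout'' _ h
      exact Or.inr ⟨hm, ih'.1 htr⟩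

end TranslateI

/-! ### Translation of embedding paths under the head move (pattern III) -/

section TranslateIII

variable {V : Type} {E' E'' : V → V → Prop} {S S'' : Set V} {q r c w t : V} {σ τ : V → V}

lemma translate_F3
    (hE'' : ∀ a b, E'' a b ↔ ((E' a b ∧ ¬(a = q ∧ b = r) ∧ ¬(a = r ∧ b = c) ∧ ¬(a = w ∧ b = t))
      ∨ (a = w ∧ b = c) ∨ (a = w ∧ b = r) ∨ (a = r ∧ b = t)))
    (hS'' : ∀ z, z ∈ S'' ↔ ((z ∈ S ∧ z ≠ q) ∨ z = w))
    (hσq : σ q = w) (hσ : ∀ z, z ≠ q → σ z = z)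
    (hinr : ∀ z, E' z r → z = q) (houtr : ∀ z, E' r z → z = c)
    (hinw : ∀ z, E' z w → z = q) (houtw : ∀ z, E' w z → z = t)
    (houtq : ∀ z, E' q z → z = w ∨ z = r)
    (hqwE : E' q w)
    (hqS : q ∈ S) (hrS : r ∉ S) (hwS : w ∉ S) (htS : t ∈ S)
    (hcr : c ≠ r) (hcw : c ≠ w) (hcq : c ≠ q) (htq : t ≠ q)
    (hqr : q ≠ r) (hqw : q ≠ w) (hwr : w ≠ r) :
    ∀ {x y}, Reach' E' S x y → y ≠ r → y ≠ w →
      ((x ≠ r → x ≠ w → Reach' E'' S'' (σ x) (σ y)) ∧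
       (x = r → (y = c ∨ (c ∉ S ∧ Reach' E'' S'' c (σ y)))) ∧
       (x = w → y = t)) := by
  have eWC : E'' w c := (hE'' w c).mpr (Or.inr (Or.inl ⟨rfl, rfl⟩))
  have eWR : E'' w r := (hE'' w r).mpr (Or.inr (Or.inr (Or.inl ⟨rfl, rfl⟩)))
  have eRT : E'' r t := (hE'' r t).mpr (Or.inr (Or.inr (Or.inr ⟨rfl, rfl⟩)))
  have eQW : E'' q w := (hE'' q w).mpr
    (Or.inl ⟨hqwE, fun hh => hwr hh.2, fun hh => hqr hh.1, fun hh => hqw hh.1⟩)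
  have hqS'' : q ∉ S'' := fun h => by
    rcases (hS'' q).mp h with ⟨_, hq⟩ | hq
    · exact hq rfl
    · exact hqw hq
  have hrS'' : r ∉ S'' := fun h => by
    rcases (hS'' r).mp h with ⟨hr, _⟩ | hr
    · exact hrS hr
    · exact hwr hr.symm
  have hnS'' : ∀ z, z ∉ S → z ≠ w → z ∉ S'' := fun z hz hzw h => by
    rcases (hS'' z).mp h with ⟨hz', _⟩ | hz'
    · exact hz hz'
    · exact hzw hz'
  intro x y h
  induction h with
  | @single x y h =>
    intro hyr hyw
    refine ⟨?_, ?_, ?_⟩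
    · intro hxr hxw
      by_cases hxq : x = q
      · rcases houtq _ (hxq ▸ h) with h' | h'
        · exact absurd h' hyw
        · exact absurd h' hyr
      · rw [hσ x hxq]
        by_cases hyq : y = q
        · rw [hyq, hσq]
          refine Reach'.cons ((hE'' x q).mpr (Or.inl ⟨hyq ▸ h, fun hh => hxq hh.1,
            fun hh => hxr hh.1, fun hh => hxw hh.1⟩)) hqS'' (Reach'.single eQW)
        · rw [hσ y hyq]
          exact Reach'.single ((hE'' x y).mpr (Or.inl ⟨h, fun hh => hxq hh.1,
            fun hh => hxr hh.1, fun hh => hxw hh.1⟩))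
    · intro hxr
      exact Or.inl (houtr _ (hxr ▸ h))
    · intro hxw
      exact houtw _ (hxw ▸ h)
  | @cons x m y h hm hrest ih =>
    intro hyr hyw
    have ih' := ih hyr hyw
    refine ⟨?_, ?_, ?_⟩
    · intro hxr hxw
      by_cases hmr : m = r
      · have hxq' : x = q := hinr _ (hmr ▸ h)
        rw [hxq', hσq]
        rcases ih'.2.1 hmr with hyc | ⟨hcS, hrr⟩
        · rw [hyc, hσ c hcq]
          exact Reach'.single eWC
        · exact Reach'.cons eWC (hnS'' c hcS hcw) hrr
      · by_cases hmw : m = w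
        · have hxq' : x = q := hinw _ (hmw ▸ h)
          have hyt : y = t := ih'.2.2 hmw
          rw [hxq', hσq, hyt, hσ t htq]
          exact Reach'.cons eWR hrS'' (Reach'.single eRT)
        · have hxq : x ≠ q := by
            intro hxq'
            rcases houtq _ (hxq' ▸ h) with h' | h'
            · exact hmw h'
            · exact hmr h'
          have hmq : m ≠ q := fun hh => hm (hh ▸ hqS)
          have hres := ih'.1 hmr hmw
          rw [hσ m hmq] at hres
          rw [hσ x hxq]
          exact Reach'.cons ((hE'' x m).mpr (Or.inl ⟨h, fun hh => hxq hh.1,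
            fun hh => hxr hh.1, fun hh => hxw hh.1⟩)) (hnS'' m hm hmw) hres
    · intro hxr
      have hmc : m = c := houtr _ (hxr ▸ h)
      have hmr' : m ≠ r := by rw [hmc]; exact hcr
      have hmw' : m ≠ w := by rw [hmc]; exact hcw
      have hmq' : m ≠ q := by rw [hmc]; exact hcq
      have hres := ih'.1 hmr' hmw'
      rw [hσ m hmq'] at hres
      rw [hmc] at hres hm
      exact Or.inr ⟨hm, hres⟩
    · intro hxw
      have hmt : m = t := houtw _ (hxw ▸ h)
      exact absurd htS (hmt ▸ hm)

lemma translate_G3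
    (hE'' : ∀ a b, E'' a b ↔ ((E' a b ∧ ¬(a = q ∧ b = r) ∧ ¬(a = r ∧ b = c) ∧ ¬(a = w ∧ b = t))
      ∨ (a = w ∧ b = c) ∨ (a = w ∧ b = r) ∨ (a = r ∧ b = t)))
    (hS'' : ∀ z, z ∈ S'' ↔ ((z ∈ S ∧ z ≠ q) ∨ z = w))
    (hτw : τ w = q) (hτ : ∀ z, z ≠ w → τ z = z)
    (hinr : ∀ z, E' z r → z = q) (houtr : ∀ z, E' r z → z = c)
    (hinw : ∀ z, E' z w → z = q) (houtw : ∀ z, E' w z → z = t)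
    (houtq : ∀ z, E' q z → z = w ∨ z = r)
    (hqwE : E' q w) (hqrE : E' q r) (hrcE : E' r c) (hwtE : E' w t)
    (hqS : q ∈ S) (hrS : r ∉ S) (hwS : w ∉ S) (htS : t ∈ S)
    (hcr : c ≠ r) (hcw : c ≠ w) (hcq : c ≠ q) (htq : t ≠ q) (htw : t ≠ w) (htr : t ≠ r)
    (hqr : q ≠ r) (hqw : q ≠ w) (hwr : w ≠ r) :
    ∀ {x y}, Reach' E'' S'' x y → y ≠ r → y ≠ q →
      ((x ≠ r → x ≠ q → Reach' E' S (τ x) (τ y)) ∧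
       (x = r → y = t) ∧ (x = q → y = w)) := by
  have g_out_r : ∀ z, E'' r z → z = t := by
    intro z h
    rcases (hE'' r z).mp h with ⟨h1, _, h3, _⟩ | ⟨h', _⟩ | ⟨h', _⟩ | ⟨_, h'⟩
    · exact absurd ⟨rfl, houtr _ h1⟩ h3
    · exact absurd h'.symm hwr
    · exact absurd h'.symm hwr
    · exact h'
  have g_in_r : ∀ z, E'' z r → z = w := by
    intro z h
    rcases (hE'' z r).mp h with ⟨h1, h2, _, _⟩ | ⟨_, h'⟩ | ⟨h', _⟩ | ⟨_, h'⟩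
    · exact absurd ⟨hinr _ h1, rfl⟩ h2
    · exact absurd h'.symm hcr
    · exact h'
    · exact absurd h'.symm htr
  have g_out_q : ∀ z, E'' q z → z = w := by
    intro z h
    rcases (hE'' q z).mp h with ⟨h1, h2, _, _⟩ | ⟨h', _⟩ | ⟨h', _⟩ | ⟨h', _⟩
    · rcases houtq _ h1 with h' | h'
      · exact h'
      · exact absurd ⟨rfl, h'⟩ h2
    · exact absurd h' hqw
    · exact absurd h' hqw
    · exact absurd h' hqr
  have g_out_w : ∀ z, E'' w z → z = c ∨ z = r := by
    intro z h
    rcases (hE'' w z).mp h with ⟨h1, _, _, h4⟩ | ⟨_, h'⟩ | ⟨_, h'⟩ | ⟨h', _⟩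
    · exact absurd ⟨rfl, houtw _ h1⟩ h4
    · exact Or.inl h'
    · exact Or.inr h'
    · exact absurd h' hwr
  have g_in_q : ∀ z, E'' z q → E' z q ∧ z ≠ w ∧ z ≠ r := by
    intro z h
    rcases (hE'' z q).mp h with ⟨h1, _, _, _⟩ | ⟨_, h'⟩ | ⟨_, h'⟩ | ⟨_, h'⟩
    · refine ⟨h1, ?_, ?_⟩
      · intro hzw
        exact htq (houtw _ (hzw ▸ h1)).symm
      · intro hzr
        exact hcq (houtr _ (hzr ▸ h1)).symm
    · exact absurd h'.symm hcq
    · exact absurd h' hqr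
    · exact absurd h'.symm htq
  have g_keep : ∀ z z', E'' z z' → z ≠ r → z ≠ q → z ≠ w → E' z z' := by
    intro z z' h hzr hzq hzw
    rcases (hE'' z z').mp h with ⟨h1, _, _, _⟩ | ⟨h', _⟩ | ⟨h', _⟩ | ⟨h', _⟩
    · exact h1
    · exact absurd h' hzw
    · exact absurd h' hzw
    · exact absurd h' hzr
  have hwS'' : w ∈ S'' := (hS'' w).mpr (Or.inr rfl)
  have htS'' : t ∈ S'' := (hS'' t).mpr (Or.inl ⟨htS, htq⟩)
  have hmemS : ∀ z, z ∉ S'' → z ≠ q → z ∉ S := by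
    intro z hz hzq hzS
    exact hz ((hS'' z).mpr (Or.inl ⟨hzS, hzq⟩))
  intro x y h
  induction h with
  | @single x y h =>
    intro hyr hyq
    refine ⟨?_, fun hx => g_out_r _ (hx ▸ h), fun hx => g_out_q _ (hx ▸ h)⟩
    intro hxr hxq
    by_cases hxw : x = w
    · rcases g_out_w _ (hxw ▸ h) with h' | h'
      · rw [hxw, hτw, h', hτ c hcw]
        exact Reach'.cons hqrE hrS (Reach'.single hrcE)
      · exact absurd h' hyr
    · rw [hτ x hxw]
      have h1 : E' x y := g_keep _ _ h hxr hxq hxw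
      have hyw : y ≠ w := by
        intro hyw'
        exact hxq (hinw _ (hyw' ▸ h1))
      rw [hτ y hyw]
      exact Reach'.single h1
  | @cons x m y h hm hrest ih =>
    intro hyr hyq
    have ih' := ih hyr hyq
    refine ⟨?_, ?_, ?_⟩
    · intro hxr hxq
      have hmw : m ≠ w := fun hh => hm (hh ▸ hwS'')
      by_cases hmr : m = r
      · have hxw' : x = w := g_in_r _ (hmr ▸ h)
        have hyt : y = t := ih'.2.1 hmr
        rw [hxw', hτw, hyt, hτ t htw]
        exact Reach'.cons hqwE hwS (Reach'.single hwtE)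
      · by_cases hmq : m = q
        · have hyw' : y = w := ih'.2.2 hmq
          rw [hyw', hτw]
          have hx := g_in_q _ (hmq ▸ h)
          rw [hτ x hx.2.1]
          exact Reach'.single hx.1
        · have hres := ih'.1 hmr hmq
          rw [hτ m hmw] at hres
          have hmS : m ∉ S := hmemS _ hm hmq
          by_cases hxw : x = w
          · rcases g_out_w _ (hxw ▸ h) with h' | h'
            · rw [hxw, hτw]
              refine Reach'.cons hqrE hrS (Reach'.cons hrcE ?_ ?_)
              · rw [← h']; exact hmS
              · rw [← h']; exact hres
            · exact absurd h' hmr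
          · rw [hτ x hxw]
            exact Reach'.cons (g_keep _ _ h hxr hxq hxw) hmS hres
    · intro hxr
      have hmt : m = t := g_out_r _ (hxr ▸ h)
      exact absurd htS'' (hmt ▸ hm)
    · intro hxq
      have hmw : m = w := g_out_q _ (hxq ▸ h)
      exact absurd hwS'' (hmw ▸ hm)

end TranslateIII

/-! ### Degree preservation under the rewiring -/

section Degrees

variable {V : Type} [Fintype V] {E1 E2 : V → V → Prop}

lemma degrees_shapeI {q r c s t : V}
    (hE2 : ∀ a b, E2 a b ↔ ((E1 a b ∧ ¬(a = q ∧ b = r) ∧ ¬(a = r ∧ b = c) ∧ ¬(a = s ∧ b = t))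
      ∨ (a = q ∧ b = c) ∨ (a = s ∧ b = r) ∨ (a = r ∧ b = t)))
    (hqr : E1 q r) (hrc : E1 r c) (hst : E1 s t)
    (hnqc : ¬ E1 q c) (hnsr : ¬ E1 s r) (hnrt : ¬ E1 r t)
    (hsq : s ≠ q) (hsr : s ≠ r) (hqr' : q ≠ r) (htr : t ≠ r) (htc : t ≠ c) (hcr : c ≠ r) :
    (∀ v, indeg E2 v = indeg E1 v) ∧ (∀ v, outdeg E2 v = outdeg E1 v) := by
  constructor
  · intro v
    by_cases hvr : v = r
    · subst hvr
      refine indeg_swap hqr hnsr ?_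
      intro z
      rw [hE2]
      constructor
      · rintro (⟨h1, h2, _, _⟩ | ⟨_, h'⟩ | ⟨h', _⟩ | ⟨_, h'⟩)
        · exact Or.inl ⟨h1, fun hzq => h2 ⟨hzq, rfl⟩⟩
        · exact absurd h'.symm hcr
        · exact Or.inr h'
        · exact absurd h'.symm htr
      · rintro (⟨h1, hzq⟩ | rfl)
        · exact Or.inl ⟨h1, fun hh => hzq hh.1, fun hh => hcr hh.2.symm, fun hh => htr hh.2.symm⟩
        · exact Or.inr (Or.inr (Or.inl ⟨rfl, rfl⟩))
    · by_cases hvc : v = c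
      · subst hvc
        refine indeg_swap hrc hnqc ?_
        intro z
        rw [hE2]
        constructor
        · rintro (⟨h1, _, h3, _⟩ | ⟨h', _⟩ | ⟨_, h'⟩ | ⟨_, h'⟩)
          · exact Or.inl ⟨h1, fun hzr => h3 ⟨hzr, rfl⟩⟩
          · exact Or.inr h'
          · exact absurd h' hvr
          · exact absurd h'.symm htc
        · rintro (⟨h1, hzr⟩ | rfl)
          · exact Or.inl ⟨h1, fun hh => hvr hh.2, fun hh => hzr hh.1, fun hh => htc hh.2.symm⟩
          · exact Or.inr (Or.inl ⟨rfl, rfl⟩)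
      · by_cases hvt : v = t
        · subst hvt
          refine indeg_swap hst hnrt ?_
          intro z
          rw [hE2]
          constructor
          · rintro (⟨h1, _, _, h4⟩ | ⟨_, h'⟩ | ⟨_, h'⟩ | ⟨h', _⟩)
            · exact Or.inl ⟨h1, fun hzs => h4 ⟨hzs, rfl⟩⟩
            · exact absurd h' hvc
            · exact absurd h' hvr
            · exact Or.inr h'
          · rintro (⟨h1, hzs⟩ | rfl)
            · exact Or.inl ⟨h1, fun hh => hvr hh.2, fun hh => hvc hh.2, fun hh => hzs hh.1⟩
            · exact Or.inr (Or.inr (Or.inr ⟨rfl, rfl⟩))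
        · refine indeg_eq_of_iff ?_
          intro z
          rw [hE2]
          constructor
          · rintro (⟨h1, _, _, _⟩ | ⟨_, h'⟩ | ⟨_, h'⟩ | ⟨_, h'⟩)
            · exact h1
            · exact absurd h' hvc
            · exact absurd h' hvr
            · exact absurd h' hvt
          · intro h1
            exact Or.inl ⟨h1, fun hh => hvr hh.2, fun hh => hvc hh.2, fun hh => hvt hh.2⟩
  · intro v
    by_cases hvq : v = q
    · subst hvq
      refine outdeg_swap hqr hnqc ?_
      intro z
      rw [hE2]
      constructor
      · rintro (⟨h1, h2, _, _⟩ | ⟨_, h'⟩ | ⟨h', _⟩ | ⟨h', _⟩)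
        · exact Or.inl ⟨h1, fun hzr => h2 ⟨rfl, hzr⟩⟩
        · exact Or.inr h'
        · exact absurd h'.symm hsq
        · exact absurd h' hqr'
      · rintro (⟨h1, hzr⟩ | rfl)
        · exact Or.inl ⟨h1, fun hh => hzr hh.2, fun hh => hqr' hh.1, fun hh => hsq hh.1.symm⟩
        · exact Or.inr (Or.inl ⟨rfl, rfl⟩)
    · by_cases hvr : v = r
      · subst hvr
        refine outdeg_swap hrc hnrt ?_
        intro z
        rw [hE2]
        constructor
        · rintro (⟨h1, _, h3, _⟩ | ⟨h', _⟩ | ⟨h', _⟩ | ⟨_, h'⟩)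
          · exact Or.inl ⟨h1, fun hzc => h3 ⟨rfl, hzc⟩⟩
          · exact absurd h' hvq
          · exact absurd h'.symm hsr
          · exact Or.inr h'
        · rintro (⟨h1, hzc⟩ | rfl)
          · exact Or.inl ⟨h1, fun hh => hvq hh.1, fun hh => hzc hh.2, fun hh => hsr hh.1.symm⟩
          · exact Or.inr (Or.inr (Or.inr ⟨rfl, rfl⟩))
      · by_cases hvs : v = s
        · subst hvs
          refine outdeg_swap hst hnsr ?_
          intro z
          rw [hE2]
          constructor
          · rintro (⟨h1, _, _, h4⟩ | ⟨h', _⟩ | ⟨_, h'⟩ | ⟨h', _⟩)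
            · exact Or.inl ⟨h1, fun hzt => h4 ⟨rfl, hzt⟩⟩
            · exact absurd h' hsq
            · exact Or.inr h'
            · exact absurd h' hsr
          · rintro (⟨h1, hzt⟩ | rfl)
            · exact Or.inl ⟨h1, fun hh => hsq hh.1, fun hh => hsr hh.1, fun hh => hzt hh.2⟩
            · exact Or.inr (Or.inr (Or.inl ⟨rfl, rfl⟩))
        · refine outdeg_eq_of_iff ?_
          intro z
          rw [hE2]
          constructor
          · rintro (⟨h1, _, _, _⟩ | ⟨h', _⟩ | ⟨h', _⟩ | ⟨h', _⟩)
            · exact h1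
            · exact absurd h' hvq
            · exact absurd h' hvs
            · exact absurd h' hvr
          · intro h1
            exact Or.inl ⟨h1, fun hh => hvq hh.1, fun hh => hvr hh.1, fun hh => hvs hh.1⟩

lemma degrees_shapeII {z0 r c t : V}
    (hE2 : ∀ a b, E2 a b ↔ ((E1 a b ∧ ¬(a = r ∧ b = c) ∧ ¬(a = z0 ∧ b = t))
      ∨ (a = z0 ∧ b = c) ∨ (a = r ∧ b = t)))
    (hrc : E1 r c) (hz0t : E1 z0 t)
    (hnz0c : ¬ E1 z0 c) (hnrt : ¬ E1 r t)
    (hz0r : z0 ≠ r) (htc : t ≠ c) (htr : t ≠ r) (hcr : c ≠ r) :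
    (∀ v, indeg E2 v = indeg E1 v) ∧ (∀ v, outdeg E2 v = outdeg E1 v) := by
  constructor
  · intro v
    by_cases hvc : v = c
    · subst hvc
      refine indeg_swap hrc hnz0c ?_
      intro z
      rw [hE2]
      constructor
      · rintro (⟨h1, h2, _⟩ | ⟨h', _⟩ | ⟨_, h'⟩)
        · exact Or.inl ⟨h1, fun hzr => h2 ⟨hzr, rfl⟩⟩
        · exact Or.inr h'
        · exact absurd h'.symm htc
      · rintro (⟨h1, hzr⟩ | rfl)
        · exact Or.inl ⟨h1, fun hh => hzr hh.1, fun hh => htc hh.2.symm⟩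
        · exact Or.inr (Or.inl ⟨rfl, rfl⟩)
    · by_cases hvt : v = t
      · subst hvt
        refine indeg_swap hz0t hnrt ?_
        intro z
        rw [hE2]
        constructor
        · rintro (⟨h1, _, h3⟩ | ⟨_, h'⟩ | ⟨h', _⟩)
          · exact Or.inl ⟨h1, fun hzz => h3 ⟨hzz, rfl⟩⟩
          · exact absurd h' hvc
          · exact Or.inr h'
        · rintro (⟨h1, hzz⟩ | rfl)
          · exact Or.inl ⟨h1, fun hh => hvc hh.2, fun hh => hzz hh.1⟩
          · exact Or.inr (Or.inr ⟨rfl, rfl⟩)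
      · refine indeg_eq_of_iff ?_
        intro z
        rw [hE2]
        constructor
        · rintro (⟨h1, _, _⟩ | ⟨_, h'⟩ | ⟨_, h'⟩)
          · exact h1
          · exact absurd h' hvc
          · exact absurd h' hvt
        · intro h1
          exact Or.inl ⟨h1, fun hh => hvc hh.2, fun hh => hvt hh.2⟩
  · intro v
    by_cases hvr : v = r
    · subst hvr
      refine outdeg_swap hrc hnrt ?_
      intro z
      rw [hE2]
      constructor
      · rintro (⟨h1, h2, _⟩ | ⟨h', _⟩ | ⟨_, h'⟩)
        · exact Or.inl ⟨h1, fun hzc => h2 ⟨rfl, hzc⟩⟩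
        · exact absurd h'.symm hz0r
        · exact Or.inr h'
      · rintro (⟨h1, hzc⟩ | rfl)
        · exact Or.inl ⟨h1, fun hh => hzc hh.2, fun hh => hz0r hh.1.symm⟩
        · exact Or.inr (Or.inr ⟨rfl, rfl⟩)
    · by_cases hvz : v = z0
      · subst hvz
        refine outdeg_swap hz0t hnz0c ?_
        intro z
        rw [hE2]
        constructor
        · rintro (⟨h1, _, h3⟩ | ⟨_, h'⟩ | ⟨h', _⟩)
          · exact Or.inl ⟨h1, fun hzt => h3 ⟨rfl, hzt⟩⟩
          · exact Or.inr h'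
          · exact absurd h' hvr
        · rintro (⟨h1, hzt⟩ | rfl)
          · exact Or.inl ⟨h1, fun hh => hvr hh.1, fun hh => hzt hh.2⟩
          · exact Or.inr (Or.inl ⟨rfl, rfl⟩)
      · refine outdeg_eq_of_iff ?_
        intro z
        rw [hE2]
        constructor
        · rintro (⟨h1, _, _⟩ | ⟨h', _⟩ | ⟨h', _⟩)
          · exact h1
          · exact absurd h' hvz
          · exact absurd h' hvr
        · intro h1
          exact Or.inl ⟨h1, fun hh => hvr hh.1, fun hh => hvz hh.1⟩

end Degrees

/-! ### Validity transport -/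

section ValidTransport

variable {V X : Type} [Fintype V]

lemma phyloNet_of_same_degrees {E1 E2 : V → V → Prop} {lab : X → V}
    (h : IsPhyloNet E1 lab)
    (hind : ∀ v, indeg E2 v = indeg E1 v) (houtd : ∀ v, outdeg E2 v = outdeg E1 v)
    (hacy : Acyclic E2) : IsPhyloNet E2 lab := by
  have hroot : ∀ v, IsRoot E2 v ↔ IsRoot E1 v := by
    intro v; unfold IsRoot; rw [hind, houtd]
  have hleaf : ∀ v, IsLeafNode E2 v ↔ IsLeafNode E1 v := by
    intro v; unfold IsLeafNode; rw [hind, houtd]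
  have hsplit : ∀ v, IsSplit E2 v ↔ IsSplit E1 v := by
    intro v; unfold IsSplit; rw [hind, houtd]
  have hretic : ∀ v, IsRetic E2 v ↔ IsRetic E1 v := by
    intro v; unfold IsRetic; rw [hind, houtd]
  refine ⟨hacy, ?_, h.lab_inj, ?_, ?_⟩
  · obtain ⟨v, hv, hvu⟩ := h.root_unique
    exact ⟨v, (hroot v).mpr hv, fun z hz => hvu z ((hroot z).mp hz)⟩
  · intro v
    rw [hleaf]
    exact h.leaf_iff v
  · intro v
    rcases h.node_types v with hh | hh | hh | hh
    · exact Or.inl ((hroot v).mpr hh)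
    · exact Or.inr (Or.inl ((hleaf v).mpr hh))
    · exact Or.inr (Or.inr (Or.inl ((hsplit v).mpr hh)))
    · exact Or.inr (Or.inr (Or.inr ((hretic v).mpr hh)))

end ValidTransport

/-! ### Characterisations of `headMoveEdges` -/

section HeadMoveChar

variable {V : Type} {E : V → V → Prop} {q r c s t w : V}

lemma headMove_eqI (hwr : E w r) (hwq : w ≠ q) (hwr' : w ≠ r) (htr : t ≠ r) :
    ∀ a b, headMoveEdges E w r q c s t a b ↔
      ((E a b ∧ ¬(a = q ∧ b = r) ∧ ¬(a = r ∧ b = c) ∧ ¬(a = s ∧ b = t))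
        ∨ (a = q ∧ b = c) ∨ (a = s ∧ b = r) ∨ (a = r ∧ b = t)) := by
  intro a b
  unfold headMoveEdges
  simp only [Prod.mk.injEq, ne_eq]
  constructor
  · rintro (⟨h1, h2, h3, h4, h5⟩ | h | h | h | h)
    · exact Or.inl ⟨h1, h2, h3, h4⟩
    · exact Or.inr (Or.inl h)
    · exact Or.inr (Or.inr (Or.inl h))
    · exact Or.inr (Or.inr (Or.inr h))
    · obtain ⟨ha, hb⟩ := h
      refine Or.inl ⟨?_, ?_, ?_, ?_⟩
      · rw [ha, hb]; exact hwr
      · intro hh; exact hwq (ha ▸ hh.1)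
      · intro hh; exact hwr' (ha ▸ hh.1)
      · intro hh; exact htr (hb ▸ hh.2).symm
  · rintro (⟨h1, h2, h3, h4⟩ | h | h | h)
    · by_cases hab : a = w ∧ b = r
      · exact Or.inr (Or.inr (Or.inr (Or.inr hab)))
      · exact Or.inl ⟨h1, h2, h3, h4, hab⟩
    · exact Or.inr (Or.inl h)
    · exact Or.inr (Or.inr (Or.inl h))
    · exact Or.inr (Or.inr (Or.inr (Or.inl h)))

lemma headMove_eqIII (hqr : E q r) (hwr : E w r)
    (hqr' : q ≠ r) (hqw : q ≠ w) (htr : t ≠ r) (hwr'' : w ≠ r) :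
    ∀ a b, headMoveEdges E q r w c w t a b ↔
      ((E a b ∧ ¬(a = r ∧ b = c) ∧ ¬(a = w ∧ b = t)) ∨ (a = w ∧ b = c) ∨ (a = r ∧ b = t)) := by
  intro a b
  unfold headMoveEdges
  simp only [Prod.mk.injEq, ne_eq]
  constructor
  · rintro (⟨h1, h2, h3, h4, h5⟩ | h | h | h | h)
    · exact Or.inl ⟨h1, h3, h4⟩
    · exact Or.inr (Or.inl h)
    · obtain ⟨ha, hb⟩ := h
      refine Or.inl ⟨?_, ?_, ?_⟩
      · rw [ha, hb]; exact hwr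
      · intro hh; exact hwr'' (ha ▸ hh.1)
      · intro hh; exact htr (hb ▸ hh.2).symm
    · exact Or.inr (Or.inr h)
    · obtain ⟨ha, hb⟩ := h
      refine Or.inl ⟨?_, ?_, ?_⟩
      · rw [ha, hb]; exact hqr
      · intro hh; exact hqr' (ha ▸ hh.1)
      · intro hh; exact hqw (ha ▸ hh.1)
  · rintro (⟨h1, h2, h3⟩ | h | h)
    · by_cases hab1 : a = w ∧ b = r
      · exact Or.inr (Or.inr (Or.inl hab1))
      · by_cases hab2 : a = q ∧ b = r
        · exact Or.inr (Or.inr (Or.inr (Or.inr hab2)))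
        · exact Or.inl ⟨h1, hab1, h2, h3, hab2⟩
    · exact Or.inr (Or.inl h)
    · exact Or.inr (Or.inr (Or.inr (Or.inl h)))

/-- Conversion between the two presentations of the pattern II rewiring. -/
lemma formI_iff_formII {E1 E2 : V → V → Prop} (hqr : E1 q r) (hqr' : q ≠ r) (htr : t ≠ r)
    (h : ∀ a b, E2 a b ↔ ((E1 a b ∧ ¬(a = q ∧ b = r) ∧ ¬(a = r ∧ b = c) ∧ ¬(a = q ∧ b = t))
      ∨ (a = q ∧ b = c) ∨ (a = q ∧ b = r) ∨ (a = r ∧ b = t))) :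
    ∀ a b, E2 a b ↔ ((E1 a b ∧ ¬(a = r ∧ b = c) ∧ ¬(a = q ∧ b = t))
      ∨ (a = q ∧ b = c) ∨ (a = r ∧ b = t)) := by
  intro a b
  rw [h]
  constructor
  · rintro (⟨h1, _, h3, h4⟩ | h' | h' | h')
    · exact Or.inl ⟨h1, h3, h4⟩
    · exact Or.inr (Or.inl h')
    · obtain ⟨ha, hb⟩ := h'
      refine Or.inl ⟨?_, ?_, ?_⟩
      · rw [ha, hb]; exact hqr
      · intro hh; exact hqr' (ha.symm.trans hh.1)
      · intro hh; exact htr (hb ▸ hh.2).symm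
    · exact Or.inr (Or.inr h')
  · rintro (⟨h1, h2, h3⟩ | h' | h')
    · by_cases hab : a = q ∧ b = r
      · exact Or.inr (Or.inr (Or.inl hab))
      · exact Or.inl ⟨h1, hab, h2, h3⟩
    · exact Or.inr (Or.inl h')
    · exact Or.inr (Or.inr (Or.inr h'))

end HeadMoveChar

/-! ### Executing the head move: pattern I -/

section Executors

lemma patternI_works {X : Type} (N T : Net X) (hN : N.valid)
    (hTtree : IsTree T)
    (E' : N.V → N.V → Prop) (φ : T.V → N.V)
    (hE'N : ∀ a b, E' a b → N.E a b)
    (hφinj : Function.Injective φ)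
    (hφdeg : ∀ v, v ∉ Set.range φ → indeg E' v = 1 ∧ outdeg E' v = 1)
    (hφchain : ∀ a b, T.E a b ↔ ∃ l : List N.V,
      List.Chain E' (φ a) (l ++ [φ b]) ∧ ∀ x ∈ l, x ∉ Set.range φ)
    (hφlab : ∀ x, φ (T.lab x) = N.lab x)
    (q r c s t w : N.V)
    (hNqr : N.E q r) (hNwr : N.E w r) (hNrc : N.E r c)
    (hinrN : ∀ z, N.E z r → z = q ∨ z = w)
    (houtrN : ∀ z, N.E r z → z = c)
    (hinc : ∀ z, N.E z c → z = r)
    (hwq : w ≠ q)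
    (hE'qr : E' q r) (hE'st : E' s t)
    (hE'inr : ∀ z, E' z r → z = q)
    (hrS : r ∉ Set.range φ)
    (hsq : s ≠ q) (hsw : s ≠ w) (hsr : s ≠ r) (htw : t ≠ w)
    (hTGtw : ¬ Relation.TransGen N.E t w)
    (htri : N.E w s ∨ N.E s w) :
    ∃ M : Net X, HeadMoveStep N M ∧ HasTriangle M.E ∧ EmbeddedTree T M := by
  have hirr : ∀ a, ¬ N.E a a := fun a h => hN.acyclic a (Relation.TransGen.single h)
  have hqr' : q ≠ r := fun h => hirr r (h ▸ hNqr)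
  have hwr' : w ≠ r := fun h => hirr r (h ▸ hNwr)
  have hcr : c ≠ r := by
    intro h
    exact hN.acyclic r ((Relation.TransGen.single hNrc).tail (h ▸ hNrc))
  have hNst : N.E s t := hE'N s t hE'st
  have htr : t ≠ r := fun h => hsq (hE'inr s (h ▸ hE'st))
  have hts' : t ≠ s := fun h => hirr s (h ▸ hNst)
  have htc : t ≠ c := fun h => hsr (hinc s (h ▸ hNst))
  have hnqc : ¬ N.E q c := fun h => hqr' (hinc q h)
  have hnsr : ¬ N.E s r := fun h => (hinrN s h).elim hsq hsw
  have hnrt : ¬ N.E r t := fun h => htc (houtrN t h)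
  have hE'outr : ∀ z, E' r z → z = c := fun z h => houtrN z (hE'N _ _ h)
  have hE'rc : E' r c := by
    obtain ⟨z, hz, _⟩ := outdeg_one_exists (hφdeg r hrS).2
    have := hE'outr z hz
    rwa [this] at hz
  set M : Net X := ⟨N.V, N.fin, headMoveEdges N.E w r q c s t, N.lab⟩ with hMdef
  have hM : ∀ a b, M.E a b ↔
      ((N.E a b ∧ ¬(a = q ∧ b = r) ∧ ¬(a = r ∧ b = c) ∧ ¬(a = s ∧ b = t))
        ∨ (a = q ∧ b = c) ∨ (a = s ∧ b = r) ∨ (a = r ∧ b = t)) :=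
    headMove_eqI hNwr hwq hwr' htr
  have hdeg := degrees_shapeI hM hNqr hNrc hNst hnqc hnsr hnrt hsq hsr hqr' htr htc hcr
  -- acyclicity
  set B : N.V → N.V → Prop := fun a b => M.E a b ∧ ¬(a = s ∧ b = r) ∧ ¬(a = r ∧ b = t)
    with hBdef
  have hBN : ∀ a b, B a b → Relation.TransGen N.E a b := by
    rintro a b ⟨hab, hb1, hb2⟩
    rcases (hM a b).mp hab with ⟨h1, _, _, _⟩ | ⟨ha, hb⟩ | h' | h'
    · exact Relation.TransGen.single h1
    · rw [ha, hb]; exact (Relation.TransGen.single hNqr).tail hNrc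
    · exact absurd h' hb1
    · exact absurd h' hb2
  have hsplitM : ∀ a b, M.E a b ↔ (B a b ∨ (a, b) = (s, r) ∨ (a, b) = (r, t)) := by
    intro a b
    simp only [Prod.mk.injEq, hBdef]
    constructor
    · intro h
      by_cases h1 : a = s ∧ b = r
      · exact Or.inr (Or.inl h1)
      · by_cases h2 : a = r ∧ b = t
        · exact Or.inr (Or.inr h2)
        · exact Or.inl ⟨h, h1, h2⟩
    · rintro (⟨h, _, _⟩ | h | h)
      · exact h
      · exact (hM a b).mpr (Or.inr (Or.inr (Or.inl h)))
      · exact (hM a b).mpr (Or.inr (Or.inr (Or.inr h)))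
  have hr_outB : ∀ z, ¬ B r z := by
    rintro z ⟨hab, hb1, hb2⟩
    rcases (hM r z).mp hab with ⟨h1, _, h3, _⟩ | ⟨ha, _⟩ | ⟨ha, _⟩ | h'
    · exact h3 ⟨rfl, houtrN z h1⟩
    · exact hqr' ha.symm
    · exact hsr ha.symm
    · exact hb2 h'
  have hr_inB : ∀ z, B z r → z = w ∨ z = s := by
    rintro z ⟨hab, hb1, _⟩
    rcases (hM z r).mp hab with ⟨h1, h2, _, _⟩ | ⟨_, hb⟩ | h' | ⟨_, hb⟩
    · rcases hinrN z h1 with rfl | rfl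
      · exact absurd ⟨rfl, rfl⟩ h2
      · exact Or.inl rfl
    · exact absurd hb.symm hcr
    · exact absurd h' hb1
    · exact absurd hb.symm htr
  have htsB : ¬ Relation.ReflTransGen B t s := by
    intro h
    rcases rtg_transfer hBN h with heq | h
    · exact hts' heq
    · exact hN.acyclic t (h.tail hNst)
  have htwB : ¬ Relation.ReflTransGen B t w := by
    intro h
    rcases rtg_transfer hBN h with heq | h
    · exact htw heq
    · exact hTGtw h
  have hMacy : Acyclic M.E := by
    intro v hv
    refine acyclic_extend hBN hN.acyclic hr_outB hr_inB htsB htwB hsr.symm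
      (fun h => htr h.symm) (fun h => hwr' h.symm) v ?_
    exact Relation.TransGen.mono (fun a b h => (hsplitM a b).mp h) _ _ hv
  have hMvalid : M.valid := phyloNet_of_same_degrees hN hdeg.1 hdeg.2 hMacy
  refine ⟨M, ⟨hN, hMvalid, w, r, q, c, s, t, hNwr, hNqr, hwq.symm, hNrc, hNst,
    ⟨Equiv.refl _, fun a b => Iff.rfl, fun x => rfl⟩⟩, ?_, ?_⟩
  · -- triangle
    rcases htri with h | h
    · exact ⟨w, s, r,
        (hM w s).mpr (Or.inl ⟨h, fun hh => hwq hh.1, fun hh => hwr' hh.1,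
          fun hh => hirr s (hh.1 ▸ h)⟩),
        (hM w r).mpr (Or.inl ⟨hNwr, fun hh => hwq hh.1, fun hh => hwr' hh.1,
          fun hh => htr hh.2.symm⟩),
        (hM s r).mpr (Or.inr (Or.inr (Or.inl ⟨rfl, rfl⟩)))⟩
    · exact ⟨s, w, r,
        (hM s w).mpr (Or.inl ⟨h, fun hh => hsq hh.1, fun hh => hsr hh.1,
          fun hh => htw hh.2.symm⟩),
        (hM s r).mpr (Or.inr (Or.inr (Or.inl ⟨rfl, rfl⟩))),
        (hM w r).mpr (Or.inl ⟨hNwr, fun hh => hwq hh.1, fun hh => hwr' hh.1,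
          fun hh => htr hh.2.symm⟩)⟩
  · -- embedded tree
    set E'' : N.V → N.V → Prop := fun a b =>
      ((E' a b ∧ ¬(a = q ∧ b = r) ∧ ¬(a = r ∧ b = c) ∧ ¬(a = s ∧ b = t))
        ∨ (a = q ∧ b = c) ∨ (a = s ∧ b = r) ∨ (a = r ∧ b = t)) with hE''def
    have hE''form : ∀ a b, E'' a b ↔
        ((E' a b ∧ ¬(a = q ∧ b = r) ∧ ¬(a = r ∧ b = c) ∧ ¬(a = s ∧ b = t))
          ∨ (a = q ∧ b = c) ∨ (a = s ∧ b = r) ∨ (a = r ∧ b = t)) := fun a b => Iff.rfl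
    have hdegE := degrees_shapeI hE''form hE'qr hE'rc hE'st
      (fun h => hnqc (hE'N _ _ h)) (fun h => hnsr (hE'N _ _ h)) (fun h => hnrt (hE'N _ _ h))
      hsq hsr hqr' htr htc hcr
    have hφar : ∀ z : T.V, φ z ≠ r := fun z h => hrS ⟨z, h⟩
    refine ⟨hTtree, E'', φ, ?_, ⟨hφinj, ?_, ?_⟩, hφlab⟩
    · rintro a b (⟨h1, h2, h3, h4⟩ | h | h | h)
      · exact (hM a b).mpr (Or.inl ⟨hE'N _ _ h1, h2, h3, h4⟩)
      · exact (hM a b).mpr (Or.inr (Or.inl h))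
      · exact (hM a b).mpr (Or.inr (Or.inr (Or.inl h)))
      · exact (hM a b).mpr (Or.inr (Or.inr (Or.inr h)))
    · intro v hv
      constructor
      · rw [hdegE.1 v]; exact (hφdeg v hv).1
      · rw [hdegE.2 v]; exact (hφdeg v hv).2
    · intro a b
      constructor
      · intro hab
        have h0 : Reach' E' (Set.range φ) (φ a) (φ b) :=
          (reach'_iff_chain E' (Set.range φ) (φ a) (φ b)).mpr ((hφchain a b).mp hab)
        have h1 := (translate_F hE''form hE'inr hE'outr hrS hcr h0 (hφar b)).1 (hφar a)
        exact (reach'_iff_chain E'' (Set.range φ) (φ a) (φ b)).mp h1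
      · intro hl
        have h0 : Reach' E'' (Set.range φ) (φ a) (φ b) :=
          (reach'_iff_chain E'' (Set.range φ) (φ a) (φ b)).mpr hl
        have h1 := (translate_G hE''form hE'inr hE'outr hE'qr hE'rc hE'st hrS htr hcr
          hqr' hsr h0 (hφar b)).1 (hφar a)
        exact (hφchain a b).mpr ((reach'_iff_chain E' (Set.range φ) (φ a) (φ b)).mp h1)

end Executors

lemma formII_iff_formI {V : Type} {E1 E2 : V → V → Prop} {q r c t : V}
    (hqr : E1 q r) (hqr' : q ≠ r) (htr : t ≠ r)
    (h : ∀ a b, E2 a b ↔ ((E1 a b ∧ ¬(a = r ∧ b = c) ∧ ¬(a = q ∧ b = t))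
      ∨ (a = q ∧ b = c) ∨ (a = r ∧ b = t))) :
    ∀ a b, E2 a b ↔ ((E1 a b ∧ ¬(a = q ∧ b = r) ∧ ¬(a = r ∧ b = c) ∧ ¬(a = q ∧ b = t))
      ∨ (a = q ∧ b = c) ∨ (a = q ∧ b = r) ∨ (a = r ∧ b = t)) := by
  intro a b
  rw [h]
  constructor
  · rintro (⟨h1, h2, h3⟩ | h' | h')
    · by_cases hab : a = q ∧ b = r
      · exact Or.inr (Or.inr (Or.inl hab))
      · exact Or.inl ⟨h1, hab, h2, h3⟩
    · exact Or.inr (Or.inl h')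
    · exact Or.inr (Or.inr (Or.inr h'))
  · rintro (⟨h1, _, h3, h4⟩ | h' | h' | h')
    · exact Or.inl ⟨h1, h3, h4⟩
    · exact Or.inr (Or.inl h')
    · obtain ⟨ha, hb⟩ := h'
      refine Or.inl ⟨?_, ?_, ?_⟩
      · rw [ha, hb]; exact hqr
      · intro hh; exact hqr' (ha.symm.trans hh.1)
      · intro hh; exact htr (hb ▸ hh.2).symm
    · exact Or.inr (Or.inr h')

lemma patternII_works {X : Type} (N T : Net X) (hN : N.valid)
    (hTtree : IsTree T)
    (E' : N.V → N.V → Prop) (φ : T.V → N.V)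
    (hE'N : ∀ a b, E' a b → N.E a b)
    (hφinj : Function.Injective φ)
    (hφdeg : ∀ v, v ∉ Set.range φ → indeg E' v = 1 ∧ outdeg E' v = 1)
    (hφchain : ∀ a b, T.E a b ↔ ∃ l : List N.V,
      List.Chain E' (φ a) (l ++ [φ b]) ∧ ∀ x ∈ l, x ∉ Set.range φ)
    (hφlab : ∀ x, φ (T.lab x) = N.lab x)
    (q r c t w : N.V)
    (hNqr : N.E q r) (hNwr : N.E w r) (hNrc : N.E r c)
    (hinrN : ∀ z, N.E z r → z = q ∨ z = w)
    (houtrN : ∀ z, N.E r z → z = c)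
    (hinc : ∀ z, N.E z c → z = r)
    (hwq : w ≠ q)
    (hNwq : N.E w q)
    (hE'qr : E' q r) (hE'qt : E' q t) (htr : t ≠ r)
    (hE'inr : ∀ z, E' z r → z = q)
    (hrS : r ∉ Set.range φ) :
    ∃ M : Net X, HeadMoveStep N M ∧ HasTriangle M.E ∧ EmbeddedTree T M := by
  have hirr : ∀ a, ¬ N.E a a := fun a h => hN.acyclic a (Relation.TransGen.single h)
  have hqr' : q ≠ r := fun h => hirr r (h ▸ hNqr)
  have hwr' : w ≠ r := fun h => hirr r (h ▸ hNwr)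
  have hcr : c ≠ r := by
    intro h
    exact hN.acyclic r ((Relation.TransGen.single hNrc).tail (h ▸ hNrc))
  have hNqt : N.E q t := hE'N q t hE'qt
  have htq : t ≠ q := fun h => hirr q (h ▸ hNqt)
  have htw : t ≠ w := by
    intro h
    exact hN.acyclic q ((Relation.TransGen.single (h ▸ hNqt : N.E q w)).tail hNwq)
  have htc : t ≠ c := fun h => hqr' (hinc q (h ▸ hNqt))
  have hnqc : ¬ N.E q c := fun h => hqr' (hinc q h)
  have hnrt : ¬ N.E r t := fun h => htc (houtrN t h)
  have hE'outr : ∀ z, E' r z → z = c := fun z h => houtrN z (hE'N _ _ h)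
  have hE'rc : E' r c := by
    obtain ⟨z, hz, _⟩ := outdeg_one_exists (hφdeg r hrS).2
    have := hE'outr z hz
    rwa [this] at hz
  have hTGwt : Relation.TransGen N.E w t := (Relation.TransGen.single hNwq).tail hNqt
  set M : Net X := ⟨N.V, N.fin, headMoveEdges N.E w r q c q t, N.lab⟩ with hMdef
  have hMI : ∀ a b, M.E a b ↔
      ((N.E a b ∧ ¬(a = q ∧ b = r) ∧ ¬(a = r ∧ b = c) ∧ ¬(a = q ∧ b = t))
        ∨ (a = q ∧ b = c) ∨ (a = q ∧ b = r) ∨ (a = r ∧ b = t)) :=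
    headMove_eqI hNwr hwq hwr' htr
  have hMII : ∀ a b, M.E a b ↔
      ((N.E a b ∧ ¬(a = r ∧ b = c) ∧ ¬(a = q ∧ b = t)) ∨ (a = q ∧ b = c) ∨ (a = r ∧ b = t)) :=
    formI_iff_formII hNqr hqr' htr hMI
  have hdeg := degrees_shapeII hMII hNrc hNqt hnqc hnrt hqr' htc htr hcr
  set B : N.V → N.V → Prop := fun a b => M.E a b ∧ ¬(a = q ∧ b = r) ∧ ¬(a = r ∧ b = t)
    with hBdef
  have hBN : ∀ a b, B a b → Relation.TransGen N.E a b := by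
    rintro a b ⟨hab, hb1, hb2⟩
    rcases (hMII a b).mp hab with ⟨h1, _, _⟩ | ⟨ha, hb⟩ | h'
    · exact Relation.TransGen.single h1
    · rw [ha, hb]; exact (Relation.TransGen.single hNqr).tail hNrc
    · exact absurd h' hb2
  have hsplitM : ∀ a b, M.E a b ↔ (B a b ∨ (a, b) = (q, r) ∨ (a, b) = (r, t)) := by
    intro a b
    simp only [Prod.mk.injEq, hBdef]
    constructor
    · intro h
      by_cases h1 : a = q ∧ b = r
      · exact Or.inr (Or.inl h1)
      · by_cases h2 : a = r ∧ b = t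
        · exact Or.inr (Or.inr h2)
        · exact Or.inl ⟨h, h1, h2⟩
    · rintro (⟨h, _, _⟩ | ⟨ha, hb⟩ | ⟨ha, hb⟩)
      · exact h
      · refine (hMII a b).mpr (Or.inl ⟨?_, ?_, ?_⟩)
        · rw [ha, hb]; exact hNqr
        · intro hh; exact hqr' (ha.symm.trans hh.1)
        · intro hh; exact htr (hb ▸ hh.2).symm
      · exact (hMII a b).mpr (Or.inr (Or.inr ⟨ha, hb⟩))
  have hr_outB : ∀ z, ¬ B r z := by
    rintro z ⟨hab, hb1, hb2⟩
    rcases (hMII r z).mp hab with ⟨h1, h2, _⟩ | ⟨ha, _⟩ | h'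
    · exact h2 ⟨rfl, houtrN z h1⟩
    · exact hqr' ha.symm
    · exact hb2 h'
  have hr_inB : ∀ z, B z r → z = w ∨ z = q := by
    rintro z ⟨hab, hb1, _⟩
    rcases (hMII z r).mp hab with ⟨h1, _, _⟩ | ⟨_, hb⟩ | ⟨_, hb⟩
    · rcases hinrN z h1 with rfl | rfl
      · exact Or.inr rfl
      · exact Or.inl rfl
    · exact absurd hb.symm hcr
    · exact absurd hb.symm htr
  have htsB : ¬ Relation.ReflTransGen B t q := by
    intro h
    rcases rtg_transfer hBN h with heq | h
    · exact htq heq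
    · exact hN.acyclic t (h.tail hNqt)
  have htwB : ¬ Relation.ReflTransGen B t w := by
    intro h
    rcases rtg_transfer hBN h with heq | h
    · exact htw heq
    · exact hN.acyclic t (h.trans hTGwt)
  have hMacy : Acyclic M.E := by
    intro v hv
    refine acyclic_extend hBN hN.acyclic hr_outB hr_inB htsB htwB
      (fun h => hqr' h.symm) (fun h => htr h.symm) (fun h => hwr' h.symm) v ?_
    exact Relation.TransGen.mono (fun a b h => (hsplitM a b).mp h) _ _ hv
  have hMvalid : M.valid := phyloNet_of_same_degrees hN hdeg.1 hdeg.2 hMacy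
  refine ⟨M, ⟨hN, hMvalid, w, r, q, c, q, t, hNwr, hNqr, hwq.symm, hNrc, hNqt,
    ⟨Equiv.refl _, fun a b => Iff.rfl, fun x => rfl⟩⟩, ?_, ?_⟩
  · -- triangle (w, q, r)
    refine ⟨w, q, r, ?_, ?_, ?_⟩
    · exact (hMII w q).mpr (Or.inl ⟨hNwq, fun hh => hwr' hh.1, fun hh => hwq hh.1⟩)
    · exact (hMII w r).mpr (Or.inl ⟨hNwr, fun hh => hwr' hh.1, fun hh => hwq hh.1⟩)
    · exact (hMII q r).mpr (Or.inl ⟨hNqr, fun hh => hqr' hh.1, fun hh => htr hh.2.symm⟩)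
  · -- embedded tree
    set E'' : N.V → N.V → Prop := fun a b =>
      ((E' a b ∧ ¬(a = r ∧ b = c) ∧ ¬(a = q ∧ b = t))
        ∨ (a = q ∧ b = c) ∨ (a = r ∧ b = t)) with hE''def
    have hE''form : ∀ a b, E'' a b ↔
        ((E' a b ∧ ¬(a = r ∧ b = c) ∧ ¬(a = q ∧ b = t))
          ∨ (a = q ∧ b = c) ∨ (a = r ∧ b = t)) := fun a b => Iff.rfl
    have hE''formI := formII_iff_formI hE'qr hqr' htr hE''form
    have hdegE := degrees_shapeII hE''form hE'rc hE'qt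
      (fun h => hnqc (hE'N _ _ h)) (fun h => hnrt (hE'N _ _ h)) hqr' htc htr hcr
    have hφar : ∀ z : T.V, φ z ≠ r := fun z h => hrS ⟨z, h⟩
    refine ⟨hTtree, E'', φ, ?_, ⟨hφinj, ?_, ?_⟩, hφlab⟩
    · rintro a b (⟨h1, h2, h3⟩ | h | h)
      · exact (hMII a b).mpr (Or.inl ⟨hE'N _ _ h1, h2, h3⟩)
      · exact (hMII a b).mpr (Or.inr (Or.inl h))
      · exact (hMII a b).mpr (Or.inr (Or.inr h))
    · intro v hv
      constructor
      · rw [hdegE.1 v]; exact (hφdeg v hv).1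
      · rw [hdegE.2 v]; exact (hφdeg v hv).2
    · intro a b
      constructor
      · intro hab
        have h0 : Reach' E' (Set.range φ) (φ a) (φ b) :=
          (reach'_iff_chain E' (Set.range φ) (φ a) (φ b)).mpr ((hφchain a b).mp hab)
        have h1 := (translate_F hE''formI hE'inr hE'outr hrS hcr h0 (hφar b)).1 (hφar a)
        exact (reach'_iff_chain E'' (Set.range φ) (φ a) (φ b)).mp h1
      · intro hl
        have h0 : Reach' E'' (Set.range φ) (φ a) (φ b) :=
          (reach'_iff_chain E'' (Set.range φ) (φ a) (φ b)).mpr hl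
        have h1 := (translate_G hE''formI hE'inr hE'outr hE'qr hE'rc hE'qt hrS htr hcr
          hqr' hqr' h0 (hφar b)).1 (hφar a)
        exact (hφchain a b).mpr ((reach'_iff_chain E' (Set.range φ) (φ a) (φ b)).mp h1)

lemma patternIII_works {X : Type} (N T : Net X) (hN : N.valid)
    (hTtree : IsTree T)
    (E' : N.V → N.V → Prop) (φ : T.V → N.V)
    (hE'N : ∀ a b, E' a b → N.E a b)
    (hφinj : Function.Injective φ)
    (hφdeg : ∀ v, v ∉ Set.range φ → indeg E' v = 1 ∧ outdeg E' v = 1)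
    (hφchain : ∀ a b, T.E a b ↔ ∃ l : List N.V,
      List.Chain E' (φ a) (l ++ [φ b]) ∧ ∀ x ∈ l, x ∉ Set.range φ)
    (hφlab : ∀ x, φ (T.lab x) = N.lab x)
    (q r c t w : N.V)
    (hNqr : N.E q r) (hNwr : N.E w r) (hNrc : N.E r c)
    (hinrN : ∀ z, N.E z r → z = q ∨ z = w)
    (houtrN : ∀ z, N.E r z → z = c)
    (hinc : ∀ z, N.E z c → z = r)
    (hwq : w ≠ q)
    (hNqw : N.E q w) (hNwt : N.E w t)
    (hE'qr : E' q r) (hE'qw : E' q w) (hE'wt : E' w t)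
    (hE'inr : ∀ z, E' z r → z = q)
    (hE'inw : ∀ z, E' z w → z = q)
    (hE'outw : ∀ z, E' w z → z = t)
    (hE'outq : ∀ z, E' q z → z = w ∨ z = r)
    (hrS : r ∉ Set.range φ) (hwS : w ∉ Set.range φ)
    (htS : t ∈ Set.range φ) (hqS : q ∈ Set.range φ)
    (hIndegE'q : indeg E' q = 1) :
    ∃ M : Net X, HeadMoveStep N M ∧ HasTriangle M.E ∧ EmbeddedTree T M := by
  classical
  have hirr : ∀ a, ¬ N.E a a := fun a h => hN.acyclic a (Relation.TransGen.single h)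
  have hqr' : q ≠ r := fun h => hirr r (h ▸ hNqr)
  have hwr' : w ≠ r := fun h => hirr r (h ▸ hNwr)
  have hqw' : q ≠ w := fun h => hirr w (h ▸ hNqw)
  have hcr : c ≠ r := by
    intro h
    exact hN.acyclic r ((Relation.TransGen.single hNrc).tail (h ▸ hNrc))
  have hNqt : Relation.TransGen N.E q t := (Relation.TransGen.single hNqw).tail hNwt
  have htq : t ≠ q := fun h => hN.acyclic q (h ▸ hNqt)
  have htw : t ≠ w := fun h => hirr w (h ▸ hNwt)
  have htr : t ≠ r := fun h => hrS (h ▸ htS)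
  have htc : t ≠ c := fun h => hwr' (hinc w (h ▸ hNwt))
  have hcw : c ≠ w := by
    intro h
    exact hN.acyclic r ((Relation.TransGen.single hNrc).tail (h ▸ hNwr))
  have hcq : c ≠ q := by
    intro h
    exact hN.acyclic r ((Relation.TransGen.single hNrc).tail (h ▸ hNqr))
  have hnwc : ¬ N.E w c := fun h => hwr' (hinc w h)
  have hnrt : ¬ N.E r t := fun h => htc (houtrN t h)
  have hE'outr : ∀ z, E' r z → z = c := fun z h => houtrN z (hE'N _ _ h)
  have hE'rc : E' r c := by
    obtain ⟨z, hz, _⟩ := outdeg_one_exists (hφdeg r hrS).2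
    have := hE'outr z hz
    rwa [this] at hz
  set M : Net X := ⟨N.V, N.fin, headMoveEdges N.E q r w c w t, N.lab⟩ with hMdef
  have hM : ∀ a b, M.E a b ↔
      ((N.E a b ∧ ¬(a = r ∧ b = c) ∧ ¬(a = w ∧ b = t)) ∨ (a = w ∧ b = c) ∨ (a = r ∧ b = t)) :=
    headMove_eqIII hNqr hNwr hqr' hqw' htr hwr'
  have hdeg := degrees_shapeII hM hNrc hNwt hnwc hnrt hwr' htc htr hcr
  set B : N.V → N.V → Prop := fun a b => M.E a b ∧ ¬(a = w ∧ b = r) ∧ ¬(a = r ∧ b = t)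
    with hBdef
  have hBN : ∀ a b, B a b → Relation.TransGen N.E a b := by
    rintro a b ⟨hab, hb1, hb2⟩
    rcases (hM a b).mp hab with ⟨h1, _, _⟩ | ⟨ha, hb⟩ | h'
    · exact Relation.TransGen.single h1
    · rw [ha, hb]; exact (Relation.TransGen.single hNwr).tail hNrc
    · exact absurd h' hb2
  have hsplitM : ∀ a b, M.E a b ↔ (B a b ∨ (a, b) = (w, r) ∨ (a, b) = (r, t)) := by
    intro a b
    simp only [Prod.mk.injEq, hBdef]
    constructor
    · intro h
      by_cases h1 : a = w ∧ b = r
      · exact Or.inr (Or.inl h1)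
      · by_cases h2 : a = r ∧ b = t
        · exact Or.inr (Or.inr h2)
        · exact Or.inl ⟨h, h1, h2⟩
    · rintro (⟨h, _, _⟩ | ⟨ha, hb⟩ | ⟨ha, hb⟩)
      · exact h
      · refine (hM a b).mpr (Or.inl ⟨?_, ?_, ?_⟩)
        · rw [ha, hb]; exact hNwr
        · intro hh; exact hwr' (ha.symm.trans hh.1)
        · intro hh; exact htr (hb ▸ hh.2).symm
      · exact (hM a b).mpr (Or.inr (Or.inr ⟨ha, hb⟩))
  have hr_outB : ∀ z, ¬ B r z := by
    rintro z ⟨hab, hb1, hb2⟩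
    rcases (hM r z).mp hab with ⟨h1, h2, _⟩ | ⟨ha, _⟩ | h'
    · exact h2 ⟨rfl, houtrN z h1⟩
    · exact hwr' ha.symm
    · exact hb2 h'
  have hr_inB : ∀ z, B z r → z = q ∨ z = w := by
    rintro z ⟨hab, hb1, _⟩
    rcases (hM z r).mp hab with ⟨h1, _, _⟩ | ⟨_, hb⟩ | ⟨_, hb⟩
    · exact hinrN z h1
    · exact absurd hb.symm hcr
    · exact absurd hb.symm htr
  have htsB : ¬ Relation.ReflTransGen B t w := by
    intro h
    rcases rtg_transfer hBN h with heq | h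
    · exact htw heq
    · exact hN.acyclic t (h.tail hNwt)
  have htwB : ¬ Relation.ReflTransGen B t q := by
    intro h
    rcases rtg_transfer hBN h with heq | h
    · exact htq heq
    · exact hN.acyclic t (h.trans hNqt)
  have hMacy : Acyclic M.E := by
    intro v hv
    refine acyclic_extend hBN hN.acyclic hr_outB hr_inB htsB htwB
      (fun h => hwr' h.symm) (fun h => htr h.symm) (fun h => hqr' h.symm) v ?_
    exact Relation.TransGen.mono (fun a b h => (hsplitM a b).mp h) _ _ hv
  have hMvalid : M.valid := phyloNet_of_same_degrees hN hdeg.1 hdeg.2 hMacy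
  refine ⟨M, ⟨hN, hMvalid, q, r, w, c, w, t, hNqr, hNwr, hwq, hNrc, hNwt,
    ⟨Equiv.refl _, fun a b => Iff.rfl, fun x => rfl⟩⟩, ?_, ?_⟩
  · -- triangle (q, w, r)
    refine ⟨q, w, r, ?_, ?_, ?_⟩
    · exact (hM q w).mpr (Or.inl ⟨hNqw, fun hh => hqr' hh.1, fun hh => hqw' hh.1⟩)
    · exact (hM q r).mpr (Or.inl ⟨hNqr, fun hh => hqr' hh.1, fun hh => hqw' hh.1⟩)
    · exact (hM w r).mpr (Or.inl ⟨hNwr, fun hh => hwr' hh.1, fun hh => htr hh.2.symm⟩)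
  · -- embedded tree with remapped embedding
    set σ : N.V → N.V := fun v => if v = q then w else v with hσdef
    set τ : N.V → N.V := fun v => if v = w then q else v with hτdef
    have hσq : σ q = w := if_pos rfl
    have hσne : ∀ z, z ≠ q → σ z = z := fun z hz => if_neg hz
    have hτw : τ w = q := if_pos rfl
    have hτne : ∀ z, z ≠ w → τ z = z := fun z hz => if_neg hz
    set φ'' : T.V → N.V := fun z => σ (φ z) with hφ''def
    set E'' : N.V → N.V → Prop := fun a b =>
      ((E' a b ∧ ¬(a = q ∧ b = r) ∧ ¬(a = r ∧ b = c) ∧ ¬(a = w ∧ b = t))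
        ∨ (a = w ∧ b = c) ∨ (a = w ∧ b = r) ∨ (a = r ∧ b = t)) with hE''def
    have hE''form : ∀ a b, E'' a b ↔
        ((E' a b ∧ ¬(a = q ∧ b = r) ∧ ¬(a = r ∧ b = c) ∧ ¬(a = w ∧ b = t))
          ∨ (a = w ∧ b = c) ∨ (a = w ∧ b = r) ∨ (a = r ∧ b = t)) := fun a b => Iff.rfl
    have hrange : ∀ z, z ∈ Set.range φ'' ↔ ((z ∈ Set.range φ ∧ z ≠ q) ∨ z = w) := by
      intro z
      constructor
      · rintro ⟨a, ha⟩
        by_cases haq : φ a = q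
        · right
          rw [← ha, hφ''def]
          simp only [haq, hσq]
        · left
          have : φ'' a = φ a := hσne _ haq
          rw [← ha, this]
          exact ⟨⟨a, rfl⟩, haq⟩
      · rintro (⟨⟨a, ha⟩, hzq⟩ | rfl)
        · exact ⟨a, by rw [hφ''def]; simp only; rw [ha, hσne z hzq]⟩
        · obtain ⟨a, ha⟩ := hqS
          exact ⟨a, by rw [hφ''def]; simp only; rw [ha, hσq]⟩
    have hφ''inj : Function.Injective φ'' := by
      intro a b h
      have h' : σ (φ a) = σ (φ b) := h
      by_cases haq : φ a = q
      · by_cases hbq : φ b = q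
        · exact hφinj (haq.trans hbq.symm)
        · rw [hσne _ hbq, haq, hσq] at h'
          exact absurd (h' ▸ (⟨b, rfl⟩ : φ b ∈ Set.range φ)) hwS
      · by_cases hbq : φ b = q
        · rw [hσne _ haq, hbq, hσq] at h'
          exact absurd (⟨a, h'⟩ : w ∈ Set.range φ) hwS
        · rw [hσne _ haq, hσne _ hbq] at h'
          exact hφinj h'
    have hφ''r : ∀ z : T.V, φ'' z ≠ r := by
      intro z h
      rw [hφ''def] at h
      simp only at h
      by_cases hq : φ z = q
      · rw [hq, hσq] at h
        exact hwr' h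
      · rw [hσne _ hq] at h
        exact hrS ⟨z, h⟩
    have hφ''q : ∀ z : T.V, φ'' z ≠ q := by
      intro z h
      rw [hφ''def] at h
      simp only at h
      by_cases hq : φ z = q
      · rw [hq, hσq] at h
        exact hqw' h.symm
      · rw [hσne _ hq] at h
        exact hq h
    have hφ''w : ∀ z : T.V, φ z ≠ r ∧ φ z ≠ w := by
      intro z
      exact ⟨fun h => hrS ⟨z, h⟩, fun h => hwS ⟨z, h⟩⟩
    have hτσ : ∀ z : T.V, τ (φ'' z) = φ z := by
      intro z
      rw [hφ''def]
      simp only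
      by_cases hq : φ z = q
      · rw [hq, hσq, hτw]
      · rw [hσne _ hq, hτne _ (hφ''w z).2]
    have eWC'' : E'' w c := Or.inr (Or.inl ⟨rfl, rfl⟩)
    have eWR'' : E'' w r := Or.inr (Or.inr (Or.inl ⟨rfl, rfl⟩))
    have eRT'' : E'' r t := Or.inr (Or.inr (Or.inr ⟨rfl, rfl⟩))
    refine ⟨hTtree, E'', φ'', ?_, ⟨hφ''inj, ?_, ?_⟩, ?_⟩
    · -- E'' is a subgraph of M
      rintro a b (⟨h1, _, h3, h4⟩ | h | h | h)
      · exact (hM a b).mpr (Or.inl ⟨hE'N _ _ h1, h3, h4⟩)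
      · exact (hM a b).mpr (Or.inr (Or.inl h))
      · refine (hM a b).mpr (Or.inl ⟨?_, ?_, ?_⟩)
        · rw [h.1, h.2]; exact hNwr
        · intro hh; exact hwr' (h.1.symm.trans hh.1)
        · intro hh; exact htr (h.2 ▸ hh.2).symm
      · exact (hM a b).mpr (Or.inr (Or.inr h))
    · -- degrees outside the range of φ''
      intro v hv
      have hvw : v ≠ w := fun h => hv ((hrange v).mpr (Or.inr h))
      by_cases hvq : v = q
      · have hq_in : indeg E'' q = 1 := by
          have hiff : ∀ z, E'' z q ↔ E' z q := by
            intro z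
            constructor
            · rintro (⟨h1, _, _, _⟩ | ⟨_, h'⟩ | ⟨_, h'⟩ | ⟨_, h'⟩)
              · exact h1
              · exact absurd h'.symm hcq
              · exact absurd h' hqr'
              · exact absurd h'.symm htq
            · intro h1
              exact Or.inl ⟨h1, fun hh => hqr' hh.2, fun hh => hcq hh.2.symm,
                fun hh => htq hh.2.symm⟩
          rw [indeg_eq_of_iff hiff]
          exact hIndegE'q
        have hq_out : outdeg E'' q = 1 := by
          refine (card_one_iff _).mpr ⟨w, ?_, ?_⟩
          · exact Or.inl ⟨hE'qw, fun hh => hwr' hh.2, fun hh => hqr' hh.1,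
              fun hh => hqw' hh.1⟩
          · intro z hz
            rcases hz with ⟨h1, h2, _, _⟩ | ⟨h', _⟩ | ⟨h', _⟩ | ⟨h', _⟩
            · rcases hE'outq z h1 with h' | h'
              · exact h'
              · exact absurd ⟨rfl, h'⟩ h2
            · exact absurd h' hqw'
            · exact absurd h' hqw'
            · exact absurd h' hqr'
        rw [hvq]
        exact ⟨hq_in, hq_out⟩
      · have hvS : v ∉ Set.range φ := fun h => hv ((hrange v).mpr (Or.inl ⟨h, hvq⟩))
        have hvt : v ≠ t := fun h => hvS (h ▸ htS)
        by_cases hvr : v = r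
        · have hr_in : indeg E'' r = 1 := by
            refine (card_one_iff _).mpr ⟨w, eWR'', ?_⟩
            intro z hz
            rcases hz with ⟨h1, h2, _, _⟩ | ⟨_, h'⟩ | ⟨h', _⟩ | ⟨_, h'⟩
            · exact absurd ⟨hE'inr z h1, rfl⟩ h2
            · exact absurd h'.symm hcr
            · exact h'
            · exact absurd h'.symm htr
          have hr_out : outdeg E'' r = 1 := by
            refine (card_one_iff _).mpr ⟨t, eRT'', ?_⟩
            intro z hz
            rcases hz with ⟨h1, _, h3, _⟩ | ⟨h', _⟩ | ⟨h', _⟩ | ⟨_, h'⟩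
            · exact absurd ⟨rfl, hE'outr z h1⟩ h3
            · exact absurd h'.symm hwr'
            · exact absurd h'.symm hwr'
            · exact h'
          rw [hvr]
          exact ⟨hr_in, hr_out⟩
        · constructor
          · by_cases hvc : v = c
            · have hswap : indeg E'' c = indeg E' c := by
                refine indeg_swap hE'rc (fun h => hnwc (hE'N _ _ h)) ?_
                intro z
                constructor
                · rintro (⟨h1, _, h3, _⟩ | ⟨h', _⟩ | ⟨_, h'⟩ | ⟨_, h'⟩)
                  · exact Or.inl ⟨h1, fun hzr => h3 ⟨hzr, rfl⟩⟩
                  · exact Or.inr h'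
                  · exact absurd h' hcr
                  · exact absurd h'.symm htc
                · rintro (⟨h1, hzr⟩ | rfl)
                  · exact Or.inl ⟨h1, fun hh => hcr hh.2, fun hh => hzr hh.1,
                      fun hh => htc hh.2.symm⟩
                  · exact Or.inr (Or.inl ⟨rfl, rfl⟩)
              rw [hvc, hswap]
              exact (hφdeg c (hvc ▸ hvS)).1
            · have hiff : ∀ z, E'' z v ↔ E' z v := by
                intro z
                constructor
                · rintro (⟨h1, _, _, _⟩ | ⟨_, h'⟩ | ⟨_, h'⟩ | ⟨_, h'⟩)
                  · exact h1
                  · exact absurd h' hvc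
                  · exact absurd h' hvr
                  · exact absurd h' hvt
                · intro h1
                  exact Or.inl ⟨h1, fun hh => hvr hh.2, fun hh => hvc hh.2,
                    fun hh => hvt hh.2⟩
              rw [indeg_eq_of_iff hiff]
              exact (hφdeg v hvS).1
          · have hiff : ∀ z, E'' v z ↔ E' v z := by
              intro z
              constructor
              · rintro (⟨h1, _, _, _⟩ | ⟨h', _⟩ | ⟨h', _⟩ | ⟨h', _⟩)
                · exact h1
                · exact absurd h' hvw
                · exact absurd h' hvw
                · exact absurd h' hvr
              · intro h1
                exact Or.inl ⟨h1, fun hh => hvq hh.1, fun hh => hvr hh.1,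
                  fun hh => hvw hh.1⟩
            rw [outdeg_eq_of_iff hiff]
            exact (hφdeg v hvS).2
    · -- chain condition
      intro a b
      constructor
      · intro hab
        have h0 : Reach' E' (Set.range φ) (φ a) (φ b) :=
          (reach'_iff_chain E' (Set.range φ) (φ a) (φ b)).mpr ((hφchain a b).mp hab)
        have h1 := (translate_F3 hE''form hrange hσq hσne hE'inr hE'outr hE'inw hE'outw
          hE'outq hE'qw hqS hrS hwS htS hcr hcw hcq htq hqr' hqw' hwr' h0
          (hφ''w b).1 (hφ''w b).2).1 (hφ''w a).1 (hφ''w a).2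
        exact (reach'_iff_chain E'' (Set.range φ'') (φ'' a) (φ'' b)).mp h1
      · intro hl
        have h0 : Reach' E'' (Set.range φ'') (φ'' a) (φ'' b) :=
          (reach'_iff_chain E'' (Set.range φ'') (φ'' a) (φ'' b)).mpr hl
        have h1 := (translate_G3 hE''form hrange hτw hτne hE'inr hE'outr hE'inw hE'outw
          hE'outq hE'qw hE'qr hE'rc hE'wt hqS hrS hwS htS hcr hcw hcq htq htw htr
          hqr' hqw' hwr' h0 (hφ''r b) (hφ''q b)).1 (hφ''r a) (hφ''q a)
        rw [hτσ a, hτσ b] at h1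
        exact (hφchain a b).mpr ((reach'_iff_chain E' (Set.range φ) (φ a) (φ b)).mp h1)
    · -- labels
      intro x
      have hlabq : N.lab x ≠ q := by
        intro h
        have hleaf : IsLeafNode N.E (N.lab x) := (hN.leaf_iff _).mpr ⟨x, rfl⟩
        exact (outdeg_zero_iff.mp hleaf.2) w (h ▸ hNqw)
      rw [hφ''def]
      simp only
      rw [hφlab x, hσne _ hlabq]

/-- every tier-1 network `N` with embedded tree `T` is one head move
away from a tier-1 network `M` that contains a triangle and has `T` as embedded tree. -/
theorem tier1_create_triangle {X : Type} (N T : Net X) (hN : N.valid)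
    (h1 : reticCount N.E = 1) (hT : EmbeddedTree T N) :
    ∃ M : Net X, HeadMoveStep N M ∧ HasTriangle M.E ∧ EmbeddedTree T M := by
  classical
  obtain ⟨hTtree, E', φ, hE'N, ⟨hφinj, hφdeg, hφchain⟩, hφlab⟩ := hT
  have hTvalid := hTtree.1
  have hTretic := hTtree.2
  have hNacy := hN.acyclic
  have hirr : ∀ a, ¬ N.E a a := fun a h => hNacy a (Relation.TransGen.single h)
  -- the unique reticulation r, its parents, its child
  obtain ⟨r, hr, hrunique⟩ := (card_one_iff (IsRetic N.E)).mp h1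
  obtain ⟨u0, p0, hup, hNur, hNpr, hinrN2⟩ := (card_two_iff (fun z => N.E z r)).mp hr.1
  obtain ⟨c, hNrc, houtrN⟩ := (card_one_iff (fun z => N.E r z)).mp hr.2
  have hcr : c ≠ r := fun h => hirr r (h ▸ hNrc)
  -- T facts
  have hTnoretic : ∀ v, ¬ IsRetic T.E v := (card_zero_iff _).mp hTretic
  obtain ⟨t0, ht0root, ht0uniq⟩ := hTvalid.root_unique
  have hT_in : ∀ v : T.V, v ≠ t0 → ∃ z, T.E z v := by
    intro v hv
    rcases hTvalid.node_types v with hh | hh | hh | hh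
    · exact absurd (ht0uniq v hh) hv
    · obtain ⟨z, hz, _⟩ := (card_one_iff _).mp hh.1
      exact ⟨z, hz⟩
    · obtain ⟨z, hz, _⟩ := (card_one_iff _).mp hh.1
      exact ⟨z, hz⟩
    · exact absurd hh (hTnoretic v)
  -- N root
  obtain ⟨ρ, hρroot, hρuniq⟩ := hN.root_unique
  have hρnoin : ∀ z, ¬ N.E z ρ := (card_zero_iff _).mp hρroot.1
  -- reach formulation of the chain condition
  have hreach : ∀ a b, T.E a b ↔ Reach' E' (Set.range φ) (φ a) (φ b) := by
    intro a b
    rw [hφchain a b, reach'_iff_chain]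
  have hchain_in : ∀ v : T.V, v ≠ t0 → ∃ z, E' z (φ v) := by
    intro v hv
    obtain ⟨z, hz⟩ := hT_in v hv
    obtain ⟨y, hy⟩ := reach'_last ((hreach z v).mp hz)
    exact ⟨y, hy⟩
  -- the root is in the range of φ, and is the image of the T-root
  have hρS : ρ ∈ Set.range φ := by
    by_contra h
    obtain ⟨z, hz, _⟩ := indeg_one_exists (hφdeg ρ h).1
    exact hρnoin z (hE'N _ _ hz)
  have hφt0 : φ t0 = ρ := by
    obtain ⟨a0, ha0⟩ := hρS
    have ha0t0 : a0 = t0 := by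
      by_contra h
      obtain ⟨z, hz⟩ := hchain_in a0 h
      rw [ha0] at hz
      exact hρnoin z (hE'N _ _ hz)
    rw [← ha0t0]
    exact ha0
  -- unique out-neighbours at non-range vertices
  have hSuniq : ∀ v, v ∉ Set.range φ → ∀ a b, E' v a → E' v b → a = b := by
    intro v hv a b ha hb
    obtain ⟨z, _, hzu⟩ := outdeg_one_exists (hφdeg v hv).2
    exact (hzu a ha).trans (hzu b hb).symm
  -- the reticulation is not in the range of φ
  have hrS : r ∉ Set.range φ := by
    rintro ⟨a, ha⟩
    rcases hTvalid.node_types a with hh | hh | hh | hh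
    · have : φ a = ρ := by rw [ht0uniq a hh, hφt0]
      exact hρnoin u0 (by rw [← this, ha]; exact hNur)
    · obtain ⟨x, hx⟩ := (hTvalid.leaf_iff a).mp hh
      have hleaf : IsLeafNode N.E (N.lab x) := (hN.leaf_iff _).mpr ⟨x, rfl⟩
      have : N.lab x = r := by rw [← hφlab x, hx, ha]
      exact (card_zero_iff _).mp hleaf.2 c (this ▸ hNrc)
    · obtain ⟨b1, b2, hb12, hab1, hab2, _⟩ := (card_two_iff _).mp hh.2
      have hr1 := (hreach a b1).mp hab1
      have hr2 := (hreach a b2).mp hab2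
      rw [ha] at hr1 hr2
      have huniq : ∀ z1 z2, E' r z1 → E' r z2 → z1 = z2 := by
        intro z1 z2 h1 h2
        exact (houtrN z1 (hE'N _ _ h1)).trans (houtrN z2 (hE'N _ _ h2)).symm
      have := reach'_force hSuniq hr1 hr2 huniq ⟨b1, rfl⟩ ⟨b2, rfl⟩
      exact hb12 (hφinj this)
    · exact hTnoretic a hh
  -- the E'-parent q of r, and the other N-parent w
  obtain ⟨q, hE'qr, hE'inr⟩ := indeg_one_exists (hφdeg r hrS).1
  have hNqr : N.E q r := hE'N _ _ hE'qr
  obtain ⟨w, hNwr, hwq, hinrN⟩ :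
      ∃ w, N.E w r ∧ w ≠ q ∧ ∀ z, N.E z r → z = q ∨ z = w := by
    rcases hinrN2 q hNqr with rfl | rfl
    · exact ⟨p0, hNpr, fun h => hup h.symm, fun z hz => hinrN2 z hz⟩
    · exact ⟨u0, hNur, hup, fun z hz => (hinrN2 z hz).symm⟩
  have hE'nwr : ¬ E' w r := fun h => hwq (hE'inr w h)
  have hqr' : q ≠ r := fun h => hirr r (h ▸ hNqr)
  have hwr' : w ≠ r := fun h => hirr r (h ▸ hNwr)
  -- exact in-neighbourhood of c
  have hinc : ∀ z, N.E z c → z = r := by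
    intro z hz
    rcases hN.node_types c with hh | hh | hh | hh
    · exact absurd hNrc ((card_zero_iff _).mp hh.1 r)
    · obtain ⟨z0, _, hz0u⟩ := (card_one_iff _).mp hh.1
      exact (hz0u z hz).trans (hz0u r hNrc).symm
    · obtain ⟨z0, _, hz0u⟩ := (card_one_iff _).mp hh.1
      exact (hz0u z hz).trans (hz0u r hNrc).symm
    · exact absurd (hrunique c hh ▸ hNrc) (hirr r)
  -- w is not in the range of φ
  have hwS : w ∉ Set.range φ := by
    rintro ⟨a, ha⟩
    rcases hTvalid.node_types a with hh | hh | hh | hh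
    · -- w would be the root; then its only child is r, but (w,r) ∉ E'
      have hwρ : w = ρ := by rw [← ha, ht0uniq a hh, hφt0]
      obtain ⟨z1, _, hz1u⟩ := (card_one_iff _).mp hρroot.2
      have houtw : ∀ z, N.E w z → z = r := by
        intro z hz
        exact (hz1u z (hwρ ▸ hz)).trans (hz1u r (hwρ ▸ hNwr)).symm
      obtain ⟨b0, hb0, _⟩ := (card_one_iff _).mp hh.2
      obtain ⟨z, hz⟩ := reach'_first ((hreach a b0).mp hb0)
      rw [ha] at hz
      exact hE'nwr (houtw z (hE'N _ _ hz) ▸ hz)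
    · obtain ⟨x, hx⟩ := (hTvalid.leaf_iff a).mp hh
      have hleaf : IsLeafNode N.E (N.lab x) := (hN.leaf_iff _).mpr ⟨x, rfl⟩
      have : N.lab x = w := by rw [← hφlab x, hx, ha]
      exact (card_zero_iff _).mp hleaf.2 r (this ▸ hNwr)
    · -- w split in T: force two chains together
      obtain ⟨b1, b2, hb12, hab1, hab2, _⟩ := (card_two_iff _).mp hh.2
      have hr1 := (hreach a b1).mp hab1
      have hr2 := (hreach a b2).mp hab2
      rw [ha] at hr1 hr2
      have huniq : ∀ z1 z2, E' w z1 → E' w z2 → z1 = z2 := by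
        intro z1 z2 h1 h2
        -- w is a split or root in N; in either case E'-out-edges of w avoid r
        rcases hN.node_types w with hh' | hh' | hh' | hh'
        · obtain ⟨o1, _, ho1u⟩ := (card_one_iff _).mp hh'.2
          have hor : o1 = r := (ho1u r hNwr).symm
          exact absurd ((hor ▸ ho1u z1 (hE'N _ _ h1)) ▸ h1) hE'nwr
        · exact absurd hNwr ((card_zero_iff _).mp hh'.2 r)
        · obtain ⟨o1, o2, ho, ho1, ho2, hou⟩ := (card_two_iff _).mp hh'.2
          have hz1o := hou z1 (hE'N _ _ h1)
          have hz2o := hou z2 (hE'N _ _ h2)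
          have hro := hou r hNwr
          rcases hro with hro | hro
          · rcases hz1o with h' | h'
            · exact absurd ((h'.trans hro.symm) ▸ h1) hE'nwr
            · rcases hz2o with h'' | h''
              · exact absurd ((h''.trans hro.symm) ▸ h2) hE'nwr
              · exact h'.trans h''.symm
          · rcases hz1o with h' | h'
            · rcases hz2o with h'' | h''
              · exact h'.trans h''.symm
              · exact absurd ((h''.trans hro.symm) ▸ h2) hE'nwr
            · exact absurd ((h'.trans hro.symm) ▸ h1) hE'nwr
        · exact absurd (hrunique w hh' ▸ hNwr) (hirr r)
      have := reach'_force hSuniq hr1 hr2 huniq ⟨b1, rfl⟩ ⟨b2, rfl⟩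
      exact hb12 (hφinj this)
    · exact hTnoretic a hh
  -- w is a split node of N
  have hw_split : IsSplit N.E w := by
    rcases hN.node_types w with hh | hh | hh | hh
    · exact absurd (hρuniq w hh ▸ hρS) hwS
    · exact absurd hNwr ((card_zero_iff _).mp hh.2 r)
    · exact hh
    · exact absurd (hrunique w hh ▸ hNwr) (hirr r)
  obtain ⟨xw, hNwxw, hxwr, houtwN⟩ :
      ∃ xw, N.E w xw ∧ xw ≠ r ∧ ∀ z, N.E w z → z = r ∨ z = xw := by
    obtain ⟨o1, o2, ho, ho1, ho2, hou⟩ := (card_two_iff _).mp hw_split.2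
    rcases hou r hNwr with hro | hro
    · exact ⟨o2, ho2, fun h => ho (hro ▸ h).symm, fun z hz =>
        (hou z hz).imp (fun h' => by rw [h', hro]) id⟩
    · exact ⟨o1, ho1, fun h => ho (hro ▸ h), fun z hz =>
        ((hou z hz).symm).imp (fun h' => by rw [h', hro]) id⟩
  obtain ⟨gw, hNgww, hinwN⟩ :
      ∃ gw, N.E gw w ∧ ∀ z, N.E z w → z = gw := by
    obtain ⟨g, hg, hgu⟩ := (card_one_iff _).mp hw_split.1
    exact ⟨g, hg, hgu⟩
  -- E'-edges at w
  obtain ⟨gw', hE'gw'w, _⟩ := indeg_one_exists (hφdeg w hwS).1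
  have hE'gww : E' gw w := by
    have := hinwN gw' (hE'N _ _ hE'gw'w)
    rwa [this] at hE'gw'w
  obtain ⟨xw', hE'wxw', houtwE1⟩ := outdeg_one_exists (hφdeg w hwS).2
  have hxw'xw : xw' = xw := by
    rcases houtwN xw' (hE'N _ _ hE'wxw') with h | h
    · exact absurd (h ▸ hE'wxw') hE'nwr
    · exact h
  have hE'wxw : E' w xw := hxw'xw ▸ hE'wxw'
  have hE'outw : ∀ z, E' w z → z = xw := fun z h => (houtwE1 z h).trans hxw'xw
  have hxww : xw ≠ w := fun h => hirr w (h ▸ hNwxw)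
  -- ====================== case selection ======================
  by_cases hA : ∃ y, E' xw y ∧ y ≠ r
  · obtain ⟨y, hE'xwy, hyr⟩ := hA
    have hNxwy : N.E xw y := hE'N _ _ hE'xwy
    by_cases hxwq : xw = q
    · -- Pattern II
      exact patternII_works N T hN hTtree E' φ hE'N hφinj hφdeg hφchain hφlab
        q r c y w hNqr hNwr hNrc hinrN houtrN hinc hwq (hxwq ▸ hNwxw) hE'qr
        (hxwq ▸ hE'xwy) hyr hE'inr hrS
    · -- Pattern I with s = xw, t = y
      have hyw : y ≠ w := by
        intro h
        exact hNacy w ((Relation.TransGen.single hNwxw).tail (h ▸ hNxwy))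
      have hTGyw : ¬ Relation.TransGen N.E y w := by
        intro h
        exact hNacy w (((Relation.TransGen.single hNwxw).tail hNxwy).trans h)
      exact patternI_works N T hN hTtree E' φ hE'N hφinj hφdeg hφchain hφlab
        q r c xw y w hNqr hNwr hNrc hinrN houtrN hinc hwq hE'qr hE'xwy hE'inr hrS
        hxwq hxww hxwr hyw hTGyw (Or.inl hNwxw)
  · -- no usable target below xw
    have hxwE' : ∀ y, E' xw y → y = r := by
      intro y hy
      by_contra h
      exact hA ⟨y, hy, h⟩
    by_cases hxwq : xw = q
    · -- xw = q : contradiction via the uncovered other child of q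
      exfalso
      -- q is a split node
      have hq_split : IsSplit N.E q := by
        rcases hN.node_types q with hh | hh | hh | hh
        · -- q root: but q has in-edge from w
          exact (hρnoin w (hρuniq q hh ▸ (hxwq ▸ hNwxw))).elim
        · exact absurd hNqr ((card_zero_iff _).mp hh.2 r)
        · exact hh
        · exact absurd (hrunique q hh ▸ hNqr) (hirr r)
      obtain ⟨xq, hNqxq, hxqr, houtqN⟩ :
          ∃ xq, N.E q xq ∧ xq ≠ r ∧ ∀ z, N.E q z → z = r ∨ z = xq := by
        obtain ⟨o1, o2, ho, ho1, ho2, hou⟩ := (card_two_iff _).mp hq_split.2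
        rcases hou r hNqr with hro | hro
        · exact ⟨o2, ho2, fun h => ho (hro ▸ h).symm, fun z hz =>
            (hou z hz).imp (fun h' => by rw [h', hro]) id⟩
        · exact ⟨o1, ho1, fun h => ho (hro ▸ h), fun z hz =>
            ((hou z hz).symm).imp (fun h' => by rw [h', hro]) id⟩
      -- the in-neighbourhood of xq is exactly {q}, but no E'-edge enters xq
      have hin_xq : ∀ z, N.E z xq → z = q := by
        intro z hz
        rcases hN.node_types xq with hh | hh | hh | hh
        · exact absurd hNqxq ((card_zero_iff _).mp hh.1 q)
        · obtain ⟨z0, _, hz0u⟩ := (card_one_iff _).mp hh.1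
          exact (hz0u z hz).trans (hz0u q hNqxq).symm
        · obtain ⟨z0, _, hz0u⟩ := (card_one_iff _).mp hh.1
          exact (hz0u z hz).trans (hz0u q hNqxq).symm
        · exact absurd (hrunique xq hh) hxqr
      have hnoE'in : ∀ z, ¬ E' z xq := by
        intro z hz
        have : z = q := hin_xq z (hE'N _ _ hz)
        rw [this] at hz
        -- E' q xq, but all E'-out edges of q = xw go to r
        exact hxqr (hxwE' xq (hxwq ▸ hz))
      by_cases hxqS : xq ∈ Set.range φ
      · obtain ⟨a, ha⟩ := hxqS
        by_cases hat0 : a = t0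
        · have : xq = ρ := by rw [← ha, hat0, hφt0]
          exact hρnoin q (this ▸ hNqxq)
        · obtain ⟨z, hz⟩ := hchain_in a hat0
          exact hnoE'in z (ha ▸ hz)
      · obtain ⟨z, hz, _⟩ := indeg_one_exists (hφdeg xq hxqS).1
        exact hnoE'in z hz
    · -- xw ≠ q : xw has no E'-out-edges, hence xw ∈ range φ
      have hxw_noout : ∀ y, ¬ E' xw y := by
        intro y hy
        exact hxwq (hE'inr xw ((hxwE' y hy) ▸ hy))
      have hxwS : xw ∈ Set.range φ := by
        by_contra h
        obtain ⟨z, hz, _⟩ := outdeg_one_exists (hφdeg xw h).2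
        exact hxw_noout z hz
      -- analysis of the parent gw of w
      by_cases hB1 : ∃ y2, E' gw y2 ∧ y2 ≠ w ∧ y2 ≠ r
      · obtain ⟨y2, hE'gwy2, hy2w, hy2r⟩ := hB1
        have hNgwy2 : N.E gw y2 := hE'N _ _ hE'gwy2
        have hgww : gw ≠ w := fun h => hirr w (h ▸ hNgww)
        have hgwr : gw ≠ r := by
          intro h
          exact hNacy w ((Relation.TransGen.single hNwr).tail (h ▸ hNgww))
        have hgwq : gw ≠ q := by
          intro h
          rcases hN.node_types q with hh | hh | hh | hh
          · obtain ⟨z1, _, hz1u⟩ := (card_one_iff _).mp hh.2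
            exact hwr' ((hz1u w (h ▸ hNgww)).trans (hz1u r hNqr).symm)
          · exact (card_zero_iff _).mp hh.2 r hNqr
          · obtain ⟨o1, o2, ho, _, _, hou⟩ := (card_two_iff _).mp hh.2
            have h1 := hou r hNqr
            have h2 := hou w (h ▸ hNgww)
            have h3 := hou y2 (h ▸ hNgwy2)
            rcases h1 with h1 | h1 <;> rcases h2 with h2 | h2 <;> rcases h3 with h3 | h3
            · exact hwr' (h2.trans h1.symm)
            · exact hwr' (h2.trans h1.symm)
            · exact hy2r (h3.trans h1.symm)
            · exact hy2w (h3.trans h2.symm)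
            · exact hy2w (h3.trans h2.symm)
            · exact hy2r (h3.trans h1.symm)
            · exact hwr' (h2.trans h1.symm)
            · exact hwr' (h2.trans h1.symm)
          · exact hirr r (hrunique q hh ▸ hNqr)
        have hTGy2w : ¬ Relation.TransGen N.E y2 w := by
          intro h
          obtain ⟨z, hz1, hz2⟩ := Relation.TransGen.tail'_iff.mp h
          have hzgw := hinwN z hz2
          rcases rtg_transfer (fun a b hh => Relation.TransGen.single hh) hz1 with heq | htg
          · rw [heq, hzgw] at hNgwy2
            exact hirr gw hNgwy2
          · exact hNacy gw ((Relation.TransGen.single hNgwy2).trans (hzgw ▸ htg))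
        exact patternI_works N T hN hTtree E' φ hE'N hφinj hφdeg hφchain hφlab
          q r c gw y2 w hNqr hNwr hNrc hinrN houtrN hinc hwq hE'qr hE'gwy2 hE'inr hrS
          hgwq hgww hgwr hy2w hTGy2w (Or.inr hNgww)
      · have hgw_out : ∀ y2, E' gw y2 → y2 = w ∨ y2 = r := by
          intro y2 h
          by_cases h1 : y2 = w
          · exact Or.inl h1
          · by_cases h2 : y2 = r
            · exact Or.inr h2
            · exact absurd ⟨y2, h, h1, h2⟩ hB1
        by_cases hB2a : E' gw r
        · -- gw = q : pattern III
          have hgwq : gw = q := hE'inr gw hB2a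
          have hNqw : N.E q w := hgwq ▸ hNgww
          have hE'qw : E' q w := hgwq ▸ hE'gww
          have hE'inw : ∀ z, E' z w → z = q := fun z h => (hinwN z (hE'N _ _ h)).trans hgwq
          have hE'outq : ∀ z, E' q z → z = w ∨ z = r := fun z h =>
            hgw_out z (by rw [hgwq]; exact h)
          have hqS : q ∈ Set.range φ := by
            by_contra h
            exact hwr' (hSuniq q h w r hE'qw hE'qr)
          have hqρ : q ≠ ρ := by
            intro h
            obtain ⟨z1, _, hz1u⟩ := (card_one_iff _).mp hρroot.2
            exact hwr' ((hz1u w (h ▸ hNqw)).trans (hz1u r (h ▸ hNqr)).symm)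
          have hIndegE'q : indeg E' q = 1 := by
            obtain ⟨a, ha⟩ := hqS
            have hat0 : a ≠ t0 := by
              intro h
              exact hqρ (by rw [← ha, h, hφt0])
            obtain ⟨z, hz⟩ := hchain_in a hat0
            rw [ha] at hz
            have hq_split : IsSplit N.E q := by
              rcases hN.node_types q with hh | hh | hh | hh
              · exact absurd (hρuniq q hh) hqρ
              · exact absurd hNqr ((card_zero_iff _).mp hh.2 r)
              · exact hh
              · exact absurd (hrunique q hh ▸ hNqr) (hirr r)
            obtain ⟨gq, _, hgqu⟩ := (card_one_iff _).mp hq_split.1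
            exact (card_one_iff _).mpr ⟨z, hz, fun z' h' =>
              (hgqu z' (hE'N _ _ h')).trans (hgqu z (hE'N _ _ hz)).symm⟩
          exact patternIII_works N T hN hTtree E' φ hE'N hφinj hφdeg hφchain hφlab
            q r c xw w hNqr hNwr hNrc hinrN houtrN hinc hwq hNqw hNwxw hE'qr hE'qw
            hE'wxw hE'inr hE'inw hE'outw hE'outq hrS hwS hxwS hqS hIndegE'q
        · -- impossibility branches
          exfalso
          by_cases hgwS : gw ∈ Set.range φ
          · obtain ⟨ag, hag⟩ := hgwS
            rcases hTvalid.node_types ag with hh | hh | hh | hh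
            · -- gw is the root: two-leaves contradiction
              have hgwρ : gw = ρ := by rw [← hag, ht0uniq ag hh, hφt0]
              have houtρ : ∀ z, N.E gw z → z = w := by
                obtain ⟨z1, _, hz1u⟩ := (card_one_iff _).mp hρroot.2
                intro z hz
                exact (hz1u z (hgwρ ▸ hz)).trans (hz1u w (hgwρ ▸ hNgww)).symm
              obtain ⟨b0, hTt0b0, hTt0u⟩ := (card_one_iff _).mp ht0root.2
              have hreach0 := (hreach t0 b0).mp hTt0b0
              rw [hφt0, ← hgwρ] at hreach0
              have hφb0 : φ b0 = xw := by
                cases hreach0 with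
                | single h =>
                  have hbw : φ b0 = w := houtρ _ (hE'N _ _ h)
                  exact absurd (show w ∈ Set.range φ from hbw ▸ ⟨b0, rfl⟩) hwS
                | @cons _ m _ h hm hrest =>
                  have hmw : m = w := houtρ _ (hE'N _ _ h)
                  rw [hmw] at hrest
                  cases hrest with
                  | single h' => exact hE'outw _ h'
                  | @cons _ m2 _ h' hm' hrest' =>
                    exact absurd (show m2 ∈ Set.range φ from by
                      rw [hE'outw _ h']; exact hxwS) hm'
              obtain ⟨x0, hx0⟩ : ∃ x0, b0 = T.lab x0 := by
                rcases hTvalid.node_types b0 with hh' | hh' | hh' | hh'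
                · exact absurd hTt0b0 ((card_zero_iff _).mp hh'.1 t0)
                · obtain ⟨x0, hx0⟩ := (hTvalid.leaf_iff b0).mp hh'
                  exact ⟨x0, hx0.symm⟩
                · obtain ⟨b1, b2, _, hb1, _, _⟩ := (card_two_iff _).mp hh'.2
                  obtain ⟨z, hz⟩ := reach'_first ((hreach b0 b1).mp hb1)
                  rw [hφb0] at hz
                  exact absurd hz (hxw_noout z)
                · exact absurd hh' (hTnoretic b0)
              obtain ⟨m, hcm, hmno⟩ := exists_sink hNacy c
              obtain ⟨x1, hx1⟩ : ∃ x1, m = N.lab x1 := by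
                rcases hN.node_types m with hh' | hh' | hh' | hh'
                · exfalso
                  have hmρ : m = ρ := hρuniq m hh'
                  rcases rtg_transfer (fun a b hh2 => Relation.TransGen.single hh2) hcm
                    with heq | htg
                  · rw [heq, hmρ] at hNrc
                    exact hρnoin r hNrc
                  · obtain ⟨z, _, hz2⟩ := Relation.TransGen.tail'_iff.mp htg
                    exact hρnoin z (hmρ ▸ hz2)
                · obtain ⟨x1, hx1⟩ := (hN.leaf_iff m).mp hh'
                  exact ⟨x1, hx1.symm⟩
                · obtain ⟨o1, o2, _, ho1, _, _⟩ := (card_two_iff _).mp hh'.2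
                  exact absurd ho1 (hmno o1)
                · exact absurd (show N.E m c from by rw [hrunique m hh']; exact hNrc)
                    (hmno c)
              have hin_xw : ∀ z, N.E z xw → z = w := by
                intro z hz
                rcases hN.node_types xw with hh' | hh' | hh' | hh'
                · exact absurd hNwxw ((card_zero_iff _).mp hh'.1 w)
                · obtain ⟨z0, _, hz0u⟩ := (card_one_iff _).mp hh'.1
                  exact (hz0u z hz).trans (hz0u w hNwxw).symm
                · obtain ⟨z0, _, hz0u⟩ := (card_one_iff _).mp hh'.1
                  exact (hz0u z hz).trans (hz0u w hNwxw).symm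
                · exact absurd (hrunique xw hh') hxwr
              have hmxw : m ≠ xw := by
                intro h
                rcases rtg_transfer (fun a b hh2 => Relation.TransGen.single hh2) hcm
                  with heq | htg
                · exact hwr' (hinc w (show N.E w c by rw [heq, h]; exact hNwxw))
                · obtain ⟨z, hz1, hz2⟩ := Relation.TransGen.tail'_iff.mp (h ▸ htg)
                  have hzw : z = w := hin_xw z hz2
                  rcases rtg_transfer (fun a b hh2 => Relation.TransGen.single hh2) hz1
                    with heq2 | htg2
                  · exact hNacy w ((Relation.TransGen.single hNwr).tail
                      (show N.E r w by rw [← hzw, ← heq2]; exact hNrc))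
                  · exact hNacy c (((hzw ▸ htg2).tail hNwr).tail hNrc)
              have hx10 : x1 ≠ x0 := by
                intro h
                apply hmxw
                rw [hx1, h, ← hφlab x0, ← hx0, hφb0]
              obtain ⟨m0, hm0rtg, hm0noin⟩ := exists_source hTvalid.acyclic (T.lab x1)
              have hm0t0 : m0 = t0 := by
                rcases hTvalid.node_types m0 with hh' | hh' | hh' | hh'
                · exact ht0uniq m0 hh'
                · obtain ⟨z, hz, _⟩ := (card_one_iff _).mp hh'.1
                  exact absurd hz (hm0noin z)
                · obtain ⟨z, hz, _⟩ := (card_one_iff _).mp hh'.1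
                  exact absurd hz (hm0noin z)
                · exact absurd hh' (hTnoretic m0)
              rw [hm0t0] at hm0rtg
              rcases Relation.ReflTransGen.cases_head hm0rtg with heq | ⟨z, hz1, hz2⟩
              · have hleaf : IsLeafNode T.E (T.lab x1) := (hTvalid.leaf_iff _).mpr ⟨x1, rfl⟩
                rw [← heq] at hleaf
                exact one_ne_zero (hleaf.1.symm.trans ht0root.1)
              · have hzb0 : z = b0 := hTt0u z hz1
                rw [hzb0] at hz2
                have hleafb0 : IsLeafNode T.E b0 := by
                  rw [hx0]
                  exact (hTvalid.leaf_iff _).mpr ⟨x0, rfl⟩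
                rcases Relation.ReflTransGen.cases_head hz2 with heq2 | ⟨z2, hz21, _⟩
                · exact hx10 (hTvalid.lab_inj (hx0.symm.trans heq2)).symm
                · exact (card_zero_iff _).mp hleafb0.2 z2 hz21
            · -- gw is a leaf image: impossible since gw has an out-edge
              obtain ⟨x, hx⟩ := (hTvalid.leaf_iff ag).mp hh
              have hleaf : IsLeafNode N.E (N.lab x) := (hN.leaf_iff _).mpr ⟨x, rfl⟩
              have hgwlab : N.lab x = gw := by rw [← hφlab x, hx, hag]
              exact (card_zero_iff _).mp hleaf.2 w (hgwlab ▸ hNgww)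
            · -- gw split in T: force
              obtain ⟨b1, b2, hb12, hab1, hab2, _⟩ := (card_two_iff _).mp hh.2
              have hr1 := (hreach ag b1).mp hab1
              have hr2 := (hreach ag b2).mp hab2
              rw [hag] at hr1 hr2
              have huniq : ∀ z1 z2, E' gw z1 → E' gw z2 → z1 = z2 := by
                intro z1 z2 hz1 hz2
                rcases hgw_out z1 hz1 with h' | h'
                · rcases hgw_out z2 hz2 with h'' | h''
                  · exact h'.trans h''.symm
                  · exact absurd (h'' ▸ hz2) hB2a
                · exact absurd (h' ▸ hz1) hB2a
              have := reach'_force hSuniq hr1 hr2 huniq ⟨b1, rfl⟩ ⟨b2, rfl⟩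
              exact hb12 (hφinj this)
            · exact hTnoretic ag hh
          · -- gw not in the range of φ: its other child is uncovered
            have hgw_split : IsSplit N.E gw := by
              rcases hN.node_types gw with hh | hh | hh | hh
              · exact absurd (hρuniq gw hh ▸ hρS) hgwS
              · exact absurd hNgww ((card_zero_iff _).mp hh.2 w)
              · exact hh
              · exact absurd ((Relation.TransGen.single
                  (hrunique gw hh ▸ hNgww)).tail hNwr) (hNacy r)
            obtain ⟨xgw, hNgwxgw, hxgww, houtgwN⟩ :
                ∃ xg, N.E gw xg ∧ xg ≠ w ∧ ∀ z, N.E gw z → z = w ∨ z = xg := by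
              obtain ⟨o1, o2, ho, ho1, ho2, hou⟩ := (card_two_iff _).mp hgw_split.2
              rcases hou w hNgww with hro | hro
              · exact ⟨o2, ho2, fun h => ho (hro ▸ h).symm, fun z hz =>
                  (hou z hz).imp (fun h' => by rw [h', hro]) id⟩
              · exact ⟨o1, ho1, fun h => ho (hro ▸ h), fun z hz =>
                  ((hou z hz).symm).imp (fun h' => by rw [h', hro]) id⟩
            have hxgwr : xgw ≠ r := by
              intro h
              rcases hinrN gw (h ▸ hNgwxgw) with h' | h'
              · exact hB2a (by rw [h']; exact hE'qr)
              · exact hirr w (h' ▸ hNgww)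
            have hin_xgw : ∀ z, N.E z xgw → z = gw := by
              rcases hN.node_types xgw with hh | hh | hh | hh
              · exact fun z hz => absurd hNgwxgw ((card_zero_iff _).mp hh.1 gw)
              · obtain ⟨z0, _, hz0u⟩ := (card_one_iff _).mp hh.1
                exact fun z hz => (hz0u z hz).trans (hz0u gw hNgwxgw).symm
              · obtain ⟨z0, _, hz0u⟩ := (card_one_iff _).mp hh.1
                exact fun z hz => (hz0u z hz).trans (hz0u gw hNgwxgw).symm
              · exact absurd (hrunique xgw hh) hxgwr
            have hnoE'in : ∀ z, ¬ E' z xgw := by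
              intro z hz
              have hzgw : z = gw := hin_xgw z (hE'N _ _ hz)
              rw [hzgw] at hz
              rcases hgw_out xgw hz with h' | h'
              · exact hxgww h'
              · exact hxgwr h'
            by_cases hxgwS : xgw ∈ Set.range φ
            · obtain ⟨a, ha⟩ := hxgwS
              by_cases hat0 : a = t0
              · refine hρnoin gw ?_
                rw [show xgw = ρ from by rw [← ha, hat0, hφt0]] at hNgwxgw
                exact hNgwxgw
              · obtain ⟨z, hz⟩ := hchain_in a hat0
                exact hnoE'in z (ha ▸ hz)
            · obtain ⟨z, hz, _⟩ := indeg_one_exists (hφdeg xgw hxgwS).1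
              exact hnoE'in z hz
end Phylo
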